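/- arXiv:1211.0949 — 4 statements merged into one kernel-verified Lean document; each statement's English description precedes it below -/
import Mathlib

section
/- Let f : [0,T) × [0,1] → ℝⁿ be a smooth solution, with f(t,·) regular for each t, of ∂ₜf = −∇ₛ²κ − ½|κ|²κ + λκ satisfying for all t the boundary conditions f(t,0) = f₋, f(t,1) = f₊ and κ(t,x) = ζ − ⟨ζ, τ(t,x)⟩τ(t,x) for x ∈ {0,1}. Then for all t, (d/dt) W_λ(f(t,·)) = −∫_I |∂ₜf|² ds ≤ 0; in particular the Willmore–Helfrich energy is non-increasing along the flow. -/
open scoped RealInnerProductSpace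
open MeasureTheory

set_option linter.unusedSectionVars false
set_option linter.unusedVariables false
noncomputable section

abbrev En (n : ℕ) := EuclideanSpace ℝ (Fin n)

variable {n : ℕ}

/-- Arc-length derivative along `f`. -/
def aD (f g : ℝ → En n) : ℝ → En n := fun x => ‖deriv f x‖⁻¹ • deriv g x

/-- Iterated arc-length derivative. -/
def aDIter (f : ℝ → En n) : ℕ → (ℝ → En n) → ℝ → En n
  | 0, g => g
  | k + 1, g => aD f (aDIter f k g)

/-- Unit tangent vector. -/
def tang (f : ℝ → En n) : ℝ → En n := aD f f

/-- Curvature vector. -/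
def curv (f : ℝ → En n) : ℝ → En n := aD f (tang f)

/-- Normal component of the arc-length derivative of a vector field along `f`. -/
def nS (f g : ℝ → En n) : ℝ → En n :=
  fun x => aD f g x - ⟪aD f g x, tang f x⟫ • tang f x

/-- Iterated normal arc-length derivative. -/
def nSIter (f : ℝ → En n) : ℕ → (ℝ → En n) → ℝ → En n
  | 0, g => g
  | k + 1, g => nS f (nSIter f k g)

/-- Arc-length derivative of a scalar field along `f`. -/
def aDS (f : ℝ → En n) (g : ℝ → ℝ) : ℝ → ℝ := fun x => ‖deriv f x‖⁻¹ * deriv g x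

/-- Length of the curve. -/
def len (f : ℝ → En n) : ℝ := ∫ x in (0:ℝ)..1, ‖deriv f x‖

/-- Willmore–Helfrich energy. -/
def WH (lam : ℝ) (ζ : En n) (f : ℝ → En n) : ℝ :=
  (∫ x in (0:ℝ)..1, ((1/2) * ‖curv f x‖ ^ 2 - ⟪curv f x, ζ⟫) * ‖deriv f x‖) + lam * len f

/-- Time derivative of a time dependent field. -/
def pT (g : ℝ → ℝ → En n) : ℝ → ℝ → En n := fun t x => deriv (fun s => g s x) t

/-- Normal component (w.r.t. the curve `f t`) of the time derivative. -/
def nT (f g : ℝ → ℝ → En n) : ℝ → ℝ → En n :=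
  fun t x => pT g t x - ⟪pT g t x, tang (f t) x⟫ • tang (f t) x

/-- Normal arc-length derivative of a time dependent field. -/
def nSF (f g : ℝ → ℝ → En n) : ℝ → ℝ → En n := fun t => nS (f t) (g t)

/-- Tangential component of the velocity. -/
def tanComp (f : ℝ → ℝ → En n) : ℝ → ℝ → ℝ := fun t x => ⟪pT f t x, tang (f t) x⟫

/-- Normal velocity. -/
def normVel (f : ℝ → ℝ → En n) : ℝ → ℝ → En n :=
  fun t x => pT f t x - tanComp f t x • tang (f t) x

/-- Scale invariant `Lᵖ` norm of the `i`-th normal derivative of `g` along `f`. -/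
def sN (f : ℝ → En n) (p : ℝ) (i : ℕ) (g : ℝ → En n) : ℝ :=
  len f ^ ((i : ℝ) + 1 - 1/p) * (∫ x in (0:ℝ)..1, ‖nSIter f i g x‖ ^ p * ‖deriv f x‖) ^ (1/p)

/-- Scale invariant Sobolev-type norm. -/
def sNk (f : ℝ → En n) (k : ℕ) (g : ℝ → En n) : ℝ :=
  ∑ i ∈ Finset.range (k + 1), sN f 2 i g

section DxDt
variable {E : Type*} [NormedAddCommGroup E] [NormedSpace ℝ E]

/-- partial derivative in second (space) variable -/
def Dx (g : ℝ × ℝ → E) : ℝ × ℝ → E := fun z => fderiv ℝ g z (0, 1)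
/-- partial derivative in first (time) variable -/
def Dt (g : ℝ × ℝ → E) : ℝ × ℝ → E := fun z => fderiv ℝ g z (1, 0)

lemma hasDerivAt_sliceX {g : ℝ × ℝ → E} {z : ℝ × ℝ} (h : DifferentiableAt ℝ g z) :
    HasDerivAt (fun y => g (z.1, y)) (Dx g z) z.2 := by
  have h1 : HasDerivAt (fun y : ℝ => ((z.1, y) : ℝ × ℝ)) (0, 1) z.2 :=
    (hasDerivAt_const _ _).prodMk (hasDerivAt_id _)
  exact (h.hasFDerivAt.comp_hasDerivAt z.2 h1)

lemma hasDerivAt_sliceT {g : ℝ × ℝ → E} {z : ℝ × ℝ} (h : DifferentiableAt ℝ g z) :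
    HasDerivAt (fun u => g (u, z.2)) (Dt g z) z.1 := by
  have h1 : HasDerivAt (fun u : ℝ => ((u, z.2) : ℝ × ℝ)) (1, 0) z.1 :=
    (hasDerivAt_id _).prodMk (hasDerivAt_const _ _)
  exact (h.hasFDerivAt.comp_hasDerivAt z.1 h1)

/-- the `Dx` of a function at a point is determined by the slice derivative. -/
lemma sliceX_unique {g : ℝ × ℝ → E} {z : ℝ × ℝ} {c : E} (h : DifferentiableAt ℝ g z)
    (hc : HasDerivAt (fun y => g (z.1, y)) c z.2) : Dx g z = c := by
  have := (hasDerivAt_sliceX h).unique hc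
  exact this

lemma sliceT_unique {g : ℝ × ℝ → E} {z : ℝ × ℝ} {c : E} (h : DifferentiableAt ℝ g z)
    (hc : HasDerivAt (fun u => g (u, z.2)) c z.1) : Dt g z = c :=
  (hasDerivAt_sliceT h).unique hc

/-- Clairaut's theorem in terms of `Dx`/`Dt`. -/
lemma clairaut {g : ℝ × ℝ → E} {z : ℝ × ℝ}
    (hg : ∀ᶠ w in nhds z, DifferentiableAt ℝ g w)
    (h2 : DifferentiableAt ℝ (fderiv ℝ g) z) :
    Dx (Dt g) z = Dt (Dx g) z := by
  have key : ∀ u v : ℝ × ℝ, fderiv ℝ (fun w => fderiv ℝ g w u) z v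
      = fderiv ℝ (fderiv ℝ g) z v u := by
    intro u v
    rw [fderiv_clm_apply h2 (differentiableAt_const u)]
    simp
  have symm := second_derivative_symmetric_of_eventually
    (f := g) (f' := fderiv ℝ g) (x := z)
    (hg.mono fun w hw => hw.hasFDerivAt) h2.hasFDerivAt (0,1) (1,0)
  show fderiv ℝ (fun w => fderiv ℝ g w (1,0)) z (0,1)
      = fderiv ℝ (fun w => fderiv ℝ g w (0,1)) z (1,0)
  rw [key (1,0) (0,1), key (0,1) (1,0), symm]

lemma contDiff_Dx {g : ℝ × ℝ → E} (hg : ContDiff ℝ (⊤ : ℕ∞) g) :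
    ContDiff ℝ (⊤ : ℕ∞) (Dx g) :=
  (hg.fderiv_right (by norm_num)).clm_apply contDiff_const

lemma contDiff_Dt {g : ℝ × ℝ → E} (hg : ContDiff ℝ (⊤ : ℕ∞) g) :
    ContDiff ℝ (⊤ : ℕ∞) (Dt g) :=
  (hg.fderiv_right (by norm_num)).clm_apply contDiff_const

lemma contDiffOn_Dx {g : ℝ × ℝ → E} {U : Set (ℝ × ℝ)} (hU : IsOpen U)
    (hg : ContDiffOn ℝ (⊤ : ℕ∞) g U) :
    ContDiffOn ℝ (⊤ : ℕ∞) (Dx g) U :=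
  (hg.fderiv_of_isOpen hU (by norm_num)).clm_apply contDiffOn_const

end DxDt

/-- Derivative of the norm of a nonvanishing function. -/
lemma hasDerivAt_norm'' {g : ℝ → En n} {g' : En n} {x : ℝ} (h : HasDerivAt g g' x)
    (hg : g x ≠ 0) :
    HasDerivAt (fun y => ‖g y‖) (⟪g x, g'⟫ / ‖g x‖) x := by
  have h1 : HasDerivAt (fun y => ⟪g y, g y⟫) (⟪g x, g'⟫ + ⟪g', g x⟫) x := h.inner ℝ h
  have h2 : (⟪g x, g x⟫ : ℝ) ≠ 0 := by
    rw [real_inner_self_eq_norm_sq]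
    exact pow_ne_zero 2 (norm_ne_zero_iff.mpr hg)
  have h3 := (Real.hasDerivAt_sqrt h2).comp x h1
  simp only [Function.comp_def] at h3
  have h4 : (fun y => Real.sqrt ⟪g y, g y⟫) = fun y => ‖g y‖ := by
    funext y
    rw [real_inner_self_eq_norm_sq, Real.sqrt_sq (norm_nonneg _)]
  rw [h4] at h3
  refine h3.congr_deriv (Eq.symm ?_)
  rw [real_inner_self_eq_norm_sq, Real.sqrt_sq (norm_nonneg _), real_inner_comm g' (g x)]
  field_simp
  ring

variable (f : ℝ → ℝ → En n)

def A1 : ℝ × ℝ → En n := Dx (Function.uncurry f)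
def A2 : ℝ × ℝ → En n := Dx (A1 f)
def B1 : ℝ × ℝ → En n := Dt (Function.uncurry f)
def B2 : ℝ × ℝ → En n := Dx (B1 f)
def B3 : ℝ × ℝ → En n := Dx (B2 f)

/-- |∂ₓ f| -/
def vv : ℝ × ℝ → ℝ := fun z => ‖A1 f z‖
/-- unit tangent -/
def tv : ℝ × ℝ → En n := fun z => ‖A1 f z‖⁻¹ • A1 f z
/-- curvature -/
def kv : ℝ × ℝ → En n := fun z => ‖A1 f z‖⁻¹ • Dx (tv f) z
/-- ∇ₛ κ -/
def nk : ℝ × ℝ → En n := fun z =>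
  ‖A1 f z‖⁻¹ • Dx (kv f) z - ⟪‖A1 f z‖⁻¹ • Dx (kv f) z, tv f z⟫ • tv f z
/-- ∇ₛ² κ -/
def n2k : ℝ × ℝ → En n := fun z =>
  ‖A1 f z‖⁻¹ • Dx (nk f) z - ⟪‖A1 f z‖⁻¹ • Dx (nk f) z, tv f z⟫ • tv f z
/-- ∇ₛ V -/
def Wv : ℝ × ℝ → En n := fun z =>
  ‖A1 f z‖⁻¹ • B2 f z - ⟪‖A1 f z‖⁻¹ • B2 f z, tv f z⟫ • tv f z
/-- energy density -/
def Gf (lam : ℝ) (ζ : En n) : ℝ × ℝ → ℝ := fun z =>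
  ((1/2) * ‖kv f z‖ ^ 2 - ⟪kv f z, ζ⟫ + lam) * vv f z
/-- boundary density -/
def Bf (ζ : En n) : ℝ × ℝ → ℝ := fun z =>
  ⟪Wv f z, kv f z - ζ⟫ - ⟪B1 f z, nk f z⟫

variable {f}

lemma diffF (hf : ContDiff ℝ (⊤ : ℕ∞) (Function.uncurry f)) :
    Differentiable ℝ (Function.uncurry f) := hf.differentiable (by norm_num)

lemma smoothA1 (hf : ContDiff ℝ (⊤ : ℕ∞) (Function.uncurry f)) :
    ContDiff ℝ (⊤ : ℕ∞) (A1 f) := contDiff_Dx hf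
lemma smoothA2 (hf : ContDiff ℝ (⊤ : ℕ∞) (Function.uncurry f)) :
    ContDiff ℝ (⊤ : ℕ∞) (A2 f) := contDiff_Dx (smoothA1 hf)
lemma smoothB1 (hf : ContDiff ℝ (⊤ : ℕ∞) (Function.uncurry f)) :
    ContDiff ℝ (⊤ : ℕ∞) (B1 f) := contDiff_Dt hf
lemma smoothB2 (hf : ContDiff ℝ (⊤ : ℕ∞) (Function.uncurry f)) :
    ContDiff ℝ (⊤ : ℕ∞) (B2 f) := contDiff_Dx (smoothB1 hf)
lemma smoothB3 (hf : ContDiff ℝ (⊤ : ℕ∞) (Function.uncurry f)) :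
    ContDiff ℝ (⊤ : ℕ∞) (B3 f) := contDiff_Dx (smoothB2 hf)

lemma hasDerivAt_fx (hf : ContDiff ℝ (⊤ : ℕ∞) (Function.uncurry f)) (s x : ℝ) :
    HasDerivAt (f s) (A1 f (s, x)) x := by
  exact hasDerivAt_sliceX ((diffF hf) (s, x))

lemma deriv_fx (hf : ContDiff ℝ (⊤ : ℕ∞) (Function.uncurry f)) (s x : ℝ) :
    deriv (f s) x = A1 f (s, x) := (hasDerivAt_fx hf s x).deriv

lemma hasDerivAt_ft (hf : ContDiff ℝ (⊤ : ℕ∞) (Function.uncurry f)) (s x : ℝ) :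
    HasDerivAt (fun u => f u x) (B1 f (s, x)) s := by
  exact hasDerivAt_sliceT ((diffF hf) (s, x))

lemma hasDerivAt_A1x (hf : ContDiff ℝ (⊤ : ℕ∞) (Function.uncurry f)) (s x : ℝ) :
    HasDerivAt (fun y => A1 f (s, y)) (A2 f (s, x)) x := by
  exact hasDerivAt_sliceX (((smoothA1 hf).differentiable (by norm_num)) (s, x))

lemma hasDerivAt_B1x (hf : ContDiff ℝ (⊤ : ℕ∞) (Function.uncurry f)) (s x : ℝ) :
    HasDerivAt (fun y => B1 f (s, y)) (B2 f (s, x)) x := by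
  exact hasDerivAt_sliceX (((smoothB1 hf).differentiable (by norm_num)) (s, x))

lemma hasDerivAt_B2x (hf : ContDiff ℝ (⊤ : ℕ∞) (Function.uncurry f)) (s x : ℝ) :
    HasDerivAt (fun y => B2 f (s, y)) (B3 f (s, x)) x := by
  exact hasDerivAt_sliceX (((smoothB2 hf).differentiable (by norm_num)) (s, x))

lemma B2_eq_Dt_A1 (hf : ContDiff ℝ (⊤ : ℕ∞) (Function.uncurry f)) :
    B2 f = Dt (A1 f) := by
  funext z
  exact clairaut (Filter.Eventually.of_forall fun w => (diffF hf) w)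
    (((hf.fderiv_right (m := (⊤ : ℕ∞)) (by norm_num)).differentiable (by norm_num)) z)

lemma B3_eq_Dt_A2 (hf : ContDiff ℝ (⊤ : ℕ∞) (Function.uncurry f)) :
    B3 f = Dt (A2 f) := by
  funext z
  have h1 : B3 f z = Dx (Dt (A1 f)) z := by rw [B3, B2_eq_Dt_A1 hf]
  rw [h1]
  exact clairaut (Filter.Eventually.of_forall fun w =>
      ((smoothA1 hf).differentiable (by norm_num)) w)
    ((((smoothA1 hf).fderiv_right (m := (⊤ : ℕ∞)) (by norm_num)).differentiable
      (by norm_num)) z)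

lemma hasDerivAt_A1t (hf : ContDiff ℝ (⊤ : ℕ∞) (Function.uncurry f)) (s x : ℝ) :
    HasDerivAt (fun u => A1 f (u, x)) (B2 f (s, x)) s := by
  rw [B2_eq_Dt_A1 hf]
  simpa using hasDerivAt_sliceT (((smoothA1 hf).differentiable (by norm_num)) (s, x))

lemma hasDerivAt_A2t (hf : ContDiff ℝ (⊤ : ℕ∞) (Function.uncurry f)) (s x : ℝ) :
    HasDerivAt (fun u => A2 f (u, x)) (B3 f (s, x)) s := by
  rw [B3_eq_Dt_A2 hf]
  simpa using hasDerivAt_sliceT (((smoothA2 hf).differentiable (by norm_num)) (s, x))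

lemma contDiffOn_Dt' {E : Type*} [NormedAddCommGroup E] [NormedSpace ℝ E]
    {g : ℝ × ℝ → E} {U : Set (ℝ × ℝ)} (hU : IsOpen U)
    (hg : ContDiffOn ℝ (⊤ : ℕ∞) g U) :
    ContDiffOn ℝ (⊤ : ℕ∞) (Dt g) U :=
  (hg.fderiv_of_isOpen hU (by norm_num)).clm_apply contDiffOn_const

lemma diffAt_of_smOn {E : Type*} [NormedAddCommGroup E] [NormedSpace ℝ E]
    {g : ℝ × ℝ → E} {U : Set (ℝ × ℝ)} {z : ℝ × ℝ} (hU : IsOpen U)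
    (hg : ContDiffOn ℝ (⊤ : ℕ∞) g U) (hz : z ∈ U) : DifferentiableAt ℝ g z :=
  (hg.differentiableOn (by norm_num)).differentiableAt (hU.mem_nhds hz)

section smoothGeom
variable {U : Set (ℝ × ℝ)}
variable (hf : ContDiff ℝ (⊤ : ℕ∞) (Function.uncurry f)) (hU : IsOpen U)
  (hA : ∀ z ∈ U, A1 f z ≠ 0)
include hf hU hA

lemma smOn_vv : ContDiffOn ℝ (⊤ : ℕ∞) (vv f) U :=
  ContDiffOn.norm ℝ ((smoothA1 hf).contDiffOn) hA

lemma smOn_ivv : ContDiffOn ℝ (⊤ : ℕ∞) (fun z => ‖A1 f z‖⁻¹) U :=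
  (smOn_vv hf hU hA).inv (fun z hz => norm_ne_zero_iff.mpr (hA z hz))

lemma smOn_tv : ContDiffOn ℝ (⊤ : ℕ∞) (tv f) U :=
  (smOn_ivv hf hU hA).smul (smoothA1 hf).contDiffOn

lemma smOn_kv : ContDiffOn ℝ (⊤ : ℕ∞) (kv f) U :=
  (smOn_ivv hf hU hA).smul (contDiffOn_Dx hU (smOn_tv hf hU hA))

lemma smOn_proj {g : ℝ × ℝ → En n} (hg : ContDiffOn ℝ (⊤ : ℕ∞) g U) :
    ContDiffOn ℝ (⊤ : ℕ∞) (fun z =>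
      ‖A1 f z‖⁻¹ • g z - ⟪‖A1 f z‖⁻¹ • g z, tv f z⟫ • tv f z) U := by
  have h1 : ContDiffOn ℝ (⊤ : ℕ∞) (fun z => ‖A1 f z‖⁻¹ • g z) U :=
    (smOn_ivv hf hU hA).smul hg
  exact h1.sub ((ContDiffOn.inner ℝ h1 (smOn_tv hf hU hA)).smul (smOn_tv hf hU hA))

lemma smOn_nk : ContDiffOn ℝ (⊤ : ℕ∞) (nk f) U :=
  smOn_proj hf hU hA (contDiffOn_Dx hU (smOn_kv hf hU hA))

lemma smOn_n2k : ContDiffOn ℝ (⊤ : ℕ∞) (n2k f) U :=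
  smOn_proj hf hU hA (contDiffOn_Dx hU (smOn_nk hf hU hA))

lemma smOn_Wv : ContDiffOn ℝ (⊤ : ℕ∞) (Wv f) U :=
  smOn_proj hf hU hA (smoothB2 hf).contDiffOn

lemma smOn_Gf (lam : ℝ) (ζ : En n) : ContDiffOn ℝ (⊤ : ℕ∞) (Gf f lam ζ) U := by
  have hk := smOn_kv hf hU hA
  have h1 : ContDiffOn ℝ (⊤ : ℕ∞) (fun z => (1/2) * ‖kv f z‖ ^ 2 - ⟪kv f z, ζ⟫ + lam) U :=
    ((contDiffOn_const.mul ((ContDiffOn.inner ℝ hk hk).congr (fun z _ => by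
        rw [real_inner_self_eq_norm_sq]))).sub
      (ContDiffOn.inner ℝ hk contDiffOn_const)).add contDiffOn_const
  exact h1.mul (smOn_vv hf hU hA)

lemma smOn_Bf (ζ : En n) : ContDiffOn ℝ (⊤ : ℕ∞) (Bf f ζ) U :=
  (ContDiffOn.inner ℝ (smOn_Wv hf hU hA) ((smOn_kv hf hU hA).sub contDiffOn_const)).sub
    (ContDiffOn.inner ℝ (smoothB1 hf).contDiffOn (smOn_nk hf hU hA))

end smoothGeom


section ident
variable (hf : ContDiff ℝ (⊤ : ℕ∞) (Function.uncurry f))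
include hf

lemma pT_eq (s x : ℝ) : pT f s x = B1 f (s, x) := (hasDerivAt_ft hf s x).deriv

lemma tang_eq (s x : ℝ) : tang (f s) x = tv f (s, x) := by
  rw [tang, aD, deriv_fx hf, tv]

lemma ev_slice {s x : ℝ} (hz : A1 f (s, x) ≠ 0) :
    ∀ᶠ y in nhds x, A1 f (s, y) ≠ 0 := by
  have hc : Continuous fun y => A1 f (s, y) :=
    (smoothA1 hf).continuous.comp (Continuous.prodMk_right s)
  exact hc.continuousAt.eventually_ne hz

lemma ev_sliceU {s x : ℝ} (hz : A1 f (s, x) ≠ 0) :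
    ∀ᶠ y in nhds x, ((s, y) : ℝ × ℝ) ∈ {z | A1 f z ≠ 0} := ev_slice hf hz

lemma isOpen_U : IsOpen {z : ℝ × ℝ | A1 f z ≠ 0} :=
  isOpen_compl_singleton.preimage (smoothA1 hf).continuous

lemma diffAt_tv {z : ℝ × ℝ} (hz : A1 f z ≠ 0) : DifferentiableAt ℝ (tv f) z :=
  diffAt_of_smOn (isOpen_U hf) (smOn_tv hf (isOpen_U hf) (fun _ h => h)) hz

lemma diffAt_kv {z : ℝ × ℝ} (hz : A1 f z ≠ 0) : DifferentiableAt ℝ (kv f) z :=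
  diffAt_of_smOn (isOpen_U hf) (smOn_kv hf (isOpen_U hf) (fun _ h => h)) hz

lemma diffAt_nk {z : ℝ × ℝ} (hz : A1 f z ≠ 0) : DifferentiableAt ℝ (nk f) z :=
  diffAt_of_smOn (isOpen_U hf) (smOn_nk hf (isOpen_U hf) (fun _ h => h)) hz

lemma diffAt_Wv {z : ℝ × ℝ} (hz : A1 f z ≠ 0) : DifferentiableAt ℝ (Wv f) z :=
  diffAt_of_smOn (isOpen_U hf) (smOn_Wv hf (isOpen_U hf) (fun _ h => h)) hz

lemma curv_eq {s x : ℝ} (hz : A1 f (s, x) ≠ 0) :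
    curv (f s) x = kv f (s, x) := by
  have h1 : tang (f s) = fun y => tv f (s, y) := funext fun y => tang_eq hf s y
  rw [curv, aD, deriv_fx hf, h1]
  have h2 : deriv (fun y => tv f (s, y)) x = Dx (tv f) (s, x) :=
    (hasDerivAt_sliceX (diffAt_tv hf hz)).deriv
  rw [h2, kv]

lemma nS_curv_eq {s x : ℝ} (hz : A1 f (s, x) ≠ 0) :
    nS (f s) (curv (f s)) x = nk f (s, x) := by
  have h1 : deriv (curv (f s)) x = Dx (kv f) (s, x) := by
    have hev : curv (f s) =ᶠ[nhds x] fun y => kv f (s, y) :=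
      (ev_slice hf hz).mono fun y hy => curv_eq hf hy
    rw [hev.deriv_eq]
    exact (hasDerivAt_sliceX (diffAt_kv hf hz)).deriv
  rw [nS, aD, deriv_fx hf, h1, tang_eq hf, nk]

lemma nS2_curv_eq {s x : ℝ} (hz : A1 f (s, x) ≠ 0) :
    nSIter (f s) 2 (curv (f s)) x = n2k f (s, x) := by
  have h1 : deriv (nS (f s) (curv (f s))) x = Dx (nk f) (s, x) := by
    have hev : nS (f s) (curv (f s)) =ᶠ[nhds x] fun y => nk f (s, y) :=
      (ev_slice hf hz).mono fun y hy => nS_curv_eq hf hy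
    rw [hev.deriv_eq]
    exact (hasDerivAt_sliceX (diffAt_nk hf hz)).deriv
  show nS (f s) (nS (f s) (nSIter (f s) 0 (curv (f s)))) x = n2k f (s, x)
  rw [nSIter]
  rw [nS, aD, deriv_fx hf, h1, tang_eq hf, n2k]

end ident

section algebra
variable {z : ℝ × ℝ}

lemma norm_tv (hz : A1 f z ≠ 0) : ‖tv f z‖ = 1 := by
  rw [tv, norm_smul]
  simp [norm_ne_zero_iff.mpr hz]

lemma inner_proj_tv (hz : A1 f z ≠ 0) (a : En n) :
    ⟪a - ⟪a, tv f z⟫ • tv f z, tv f z⟫ = 0 := by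
  rw [inner_sub_left, real_inner_smul_left, real_inner_self_eq_norm_sq, norm_tv hz]
  ring

lemma inner_Wv_tv (hz : A1 f z ≠ 0) : ⟪Wv f z, tv f z⟫ = 0 := inner_proj_tv hz _
lemma inner_nk_tv (hz : A1 f z ≠ 0) : ⟪nk f z, tv f z⟫ = 0 := inner_proj_tv hz _
lemma inner_n2k_tv (hz : A1 f z ≠ 0) : ⟪n2k f z, tv f z⟫ = 0 := inner_proj_tv hz _

/-- generic decomposition : a = v • (projection) + ⟪a, τ⟫ • τ -/
lemma decomp {c : ℝ} (hc : c ≠ 0) (a t : En n) :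
    c • (c⁻¹ • a - ⟪c⁻¹ • a, t⟫ • t) + ⟪a, t⟫ • t = a := by
  rw [smul_sub, smul_smul, smul_smul, real_inner_smul_left]
  rw [mul_inv_cancel₀ hc, ← mul_assoc, mul_inv_cancel₀ hc, one_smul, one_mul, sub_add_cancel]

end algebra

section timeDeriv
variable (hf : ContDiff ℝ (⊤ : ℕ∞) (Function.uncurry f))
include hf

lemma ev2 {z : ℝ × ℝ} (hz : A1 f z ≠ 0) : ∀ᶠ w in nhds z, A1 f w ≠ 0 :=
  (smoothA1 hf).continuous.continuousAt.eventually_ne hz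

lemma A1_eq_vv_smul_tv {z : ℝ × ℝ} (hz : A1 f z ≠ 0) :
    A1 f z = vv f z • tv f z := by
  rw [tv, vv, smul_smul]
  rw [mul_inv_cancel₀ (norm_ne_zero_iff.mpr hz), one_smul]

lemma inner_tv_Dxtv {s x : ℝ} (hz : A1 f (s, x) ≠ 0) :
    ⟪tv f (s, x), Dx (tv f) (s, x)⟫ = 0 := by
  have hsl : HasDerivAt (fun y => tv f (s, y)) (Dx (tv f) (s, x)) x :=
    hasDerivAt_sliceX (diffAt_tv hf hz)
  have h1 : HasDerivAt (fun y => ⟪tv f (s, y), tv f (s, y)⟫)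
      (⟪tv f (s, x), Dx (tv f) (s, x)⟫ + ⟪Dx (tv f) (s, x), tv f (s, x)⟫) x :=
    hsl.inner ℝ hsl
  have h2 : (fun y => ⟪tv f (s, y), tv f (s, y)⟫) =ᶠ[nhds x] fun _ => (1 : ℝ) :=
    (ev_slice hf hz).mono fun y hy => by
      show ⟪tv f (s, y), tv f (s, y)⟫ = (1:ℝ)
      rw [real_inner_self_eq_norm_sq, norm_tv hy, one_pow]
  have h4 : HasDerivAt (fun y => ⟪tv f (s, y), tv f (s, y)⟫) 0 x :=
    (hasDerivAt_const x (1 : ℝ)).congr_of_eventuallyEq h2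
  have h5 := h1.unique h4
  have h6 := real_inner_comm (tv f (s, x)) (Dx (tv f) (s, x))
  linarith

lemma inner_tv_kv {s x : ℝ} (hz : A1 f (s, x) ≠ 0) :
    ⟪tv f (s, x), kv f (s, x)⟫ = 0 := by
  rw [kv, real_inner_smul_right, inner_tv_Dxtv hf hz, mul_zero]

lemma hasDerivAt_vv_t (s x : ℝ) (hz : A1 f (s, x) ≠ 0) :
    HasDerivAt (fun u => vv f (u, x)) (⟪tv f (s, x), B2 f (s, x)⟫) s := by
  have h1 := hasDerivAt_norm'' (hasDerivAt_A1t hf s x) hz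
  refine h1.congr_deriv (Eq.symm ?_)
  rw [tv, real_inner_smul_left, div_eq_inv_mul]

lemma hasDerivAt_ivv_t (s x : ℝ) (hz : A1 f (s, x) ≠ 0) :
    HasDerivAt (fun u => ‖A1 f (u, x)‖⁻¹)
      (-(⟪tv f (s, x), B2 f (s, x)⟫) / vv f (s, x) ^ 2) s := by
  have hv : vv f (s, x) ≠ 0 := norm_ne_zero_iff.mpr hz
  have h1 := (hasDerivAt_vv_t hf s x hz).inv hv
  exact h1

lemma hasDerivAt_tv_t (s x : ℝ) (hz : A1 f (s, x) ≠ 0) :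
    HasDerivAt (fun u => tv f (u, x)) (Wv f (s, x)) s := by
  have h1 := (hasDerivAt_ivv_t hf s x hz).smul (hasDerivAt_A1t hf s x)
  refine h1.congr_deriv (Eq.symm ?_)
  set z : ℝ × ℝ := (s, x) with hzdef
  have hv : vv f z ≠ 0 := norm_ne_zero_iff.mpr hz
  have h2 : (-(⟪tv f z, B2 f z⟫) / vv f z ^ 2) • A1 f z
      = -((‖A1 f z‖⁻¹ * ⟪B2 f z, tv f z⟫) • tv f z) := by
    rw [show ‖A1 f z‖ = vv f z from rfl, A1_eq_vv_smul_tv hf hz, smul_smul,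
      real_inner_comm (tv f z), ← neg_smul]
    congr 1
    field_simp
  rw [Wv, real_inner_smul_left, sub_eq_add_neg, ← h2, add_comm]

lemma diffAt_Dxtv {z : ℝ × ℝ} (hz : A1 f z ≠ 0) : DifferentiableAt ℝ (Dx (tv f)) z :=
  diffAt_of_smOn (isOpen_U hf)
    (contDiffOn_Dx (isOpen_U hf) (smOn_tv hf (isOpen_U hf) (fun _ h => h))) hz

lemma diffAt_Dxkv {z : ℝ × ℝ} (hz : A1 f z ≠ 0) : DifferentiableAt ℝ (Dx (kv f)) z :=
  diffAt_of_smOn (isOpen_U hf)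
    (contDiffOn_Dx (isOpen_U hf) (smOn_kv hf (isOpen_U hf) (fun _ h => h))) hz

lemma diffAt_Dxnk {z : ℝ × ℝ} (hz : A1 f z ≠ 0) : DifferentiableAt ℝ (Dx (nk f)) z :=
  diffAt_of_smOn (isOpen_U hf)
    (contDiffOn_Dx (isOpen_U hf) (smOn_nk hf (isOpen_U hf) (fun _ h => h))) hz

lemma diffAt_DxWv {z : ℝ × ℝ} (hz : A1 f z ≠ 0) : DifferentiableAt ℝ (Dx (Wv f)) z :=
  diffAt_of_smOn (isOpen_U hf)
    (contDiffOn_Dx (isOpen_U hf) (smOn_Wv hf (isOpen_U hf) (fun _ h => h))) hz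

lemma Dt_tv_eq {z : ℝ × ℝ} (hz : A1 f z ≠ 0) : Dt (tv f) z = Wv f z :=
  sliceT_unique (diffAt_tv hf hz) (hasDerivAt_tv_t hf z.1 z.2 hz)

lemma Dt_Dxtv_eq {z : ℝ × ℝ} (hz : A1 f z ≠ 0) :
    Dt (Dx (tv f)) z = Dx (Wv f) z := by
  have hcl : Dx (Dt (tv f)) z = Dt (Dx (tv f)) z := by
    refine clairaut ((ev2 hf hz).mono fun w hw => diffAt_tv hf hw) ?_
    exact diffAt_of_smOn (isOpen_U hf)
      ((smOn_tv hf (isOpen_U hf) (fun _ h => h)).fderiv_of_isOpen (isOpen_U hf)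
        (by norm_num)) hz
  rw [← hcl]
  have hev : Dt (tv f) =ᶠ[nhds z] Wv f :=
    (ev2 hf hz).mono fun w hw => Dt_tv_eq hf hw
  show fderiv ℝ (Dt (tv f)) z (0, 1) = fderiv ℝ (Wv f) z (0, 1)
  rw [hev.fderiv_eq]

lemma hasDerivAt_kv_t (s x : ℝ) (hz : A1 f (s, x) ≠ 0) :
    HasDerivAt (fun u => kv f (u, x))
      ((-(⟪tv f (s, x), B2 f (s, x)⟫) / vv f (s, x) ^ 2) • Dx (tv f) (s, x)
        + ‖A1 f (s, x)‖⁻¹ • Dx (Wv f) (s, x)) s := by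
  have hDt : HasDerivAt (fun u => Dx (tv f) (u, x)) (Dx (Wv f) (s, x)) s := by
    have := hasDerivAt_sliceT (diffAt_Dxtv hf hz)
    rw [Dt_Dxtv_eq hf hz] at this
    exact this
  have := (hasDerivAt_ivv_t hf s x hz).smul hDt
  rw [add_comm] at this
  exact this

end timeDeriv

/-- time derivative of the curvature -/
def ktv (f : ℝ → ℝ → En n) : ℝ × ℝ → En n := fun z =>
  (-(⟪tv f z, B2 f z⟫) / vv f z ^ 2) • Dx (tv f) z + ‖A1 f z‖⁻¹ • Dx (Wv f) z

section core
variable (hf : ContDiff ℝ (⊤ : ℕ∞) (Function.uncurry f))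
include hf

lemma hasDerivAt_kv_t' (t x : ℝ) (hz : A1 f (t, x) ≠ 0) :
    HasDerivAt (fun u => kv f (u, x)) (ktv f (t, x)) t := hasDerivAt_kv_t hf t x hz

lemma core1 (lam : ℝ) (ζ : En n) (t x : ℝ) (hz : A1 f (t, x) ≠ 0) :
    HasDerivAt (fun u => Gf f lam ζ (u, x))
      (⟪ktv f (t, x), kv f (t, x)⟫ * vv f (t, x) - ⟪ktv f (t, x), ζ⟫ * vv f (t, x)
        + ((1/2) * ‖kv f (t, x)‖ ^ 2 - ⟪kv f (t, x), ζ⟫ + lam)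
          * ⟪tv f (t, x), B2 f (t, x)⟫) t := by
  have hfun : (fun u => Gf f lam ζ (u, x))
      = fun u => ((1/2) * ⟪kv f (u, x), kv f (u, x)⟫ - ⟪kv f (u, x), ζ⟫ + lam)
          * vv f (u, x) := by
    funext u
    rw [Gf, ← real_inner_self_eq_norm_sq]
  have hk := hasDerivAt_kv_t' hf t x hz
  have hv := hasDerivAt_vv_t hf t x hz
  have h1 := ((hk.inner ℝ hk).const_mul (1/2 : ℝ)).sub (hk.inner ℝ (hasDerivAt_const t ζ))
  have h2 := (h1.add (hasDerivAt_const t lam)).mul hv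
  rw [hfun]
  refine h2.congr_deriv (Eq.symm ?_)
  simp only [inner_zero_right, add_zero, real_inner_self_eq_norm_sq, Pi.add_apply, Pi.sub_apply]
  rw [real_inner_comm (kv f (t, x)) (ktv f (t, x))]
  ring

lemma Dx_Bf_eq (ζ : En n) (t x : ℝ) (hz : A1 f (t, x) ≠ 0) :
    Dx (Bf f ζ) (t, x)
      = (⟪Wv f (t, x), Dx (kv f) (t, x)⟫ + ⟪Dx (Wv f) (t, x), kv f (t, x) - ζ⟫)
        - (⟪B1 f (t, x), Dx (nk f) (t, x)⟫ + ⟪B2 f (t, x), nk f (t, x)⟫) := by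
  have hW := hasDerivAt_sliceX (diffAt_Wv hf hz)
  have hk := hasDerivAt_sliceX (diffAt_kv hf hz)
  have hV := hasDerivAt_B1x hf t x
  have hν := hasDerivAt_sliceX (diffAt_nk hf hz)
  have hBdiff : DifferentiableAt ℝ (Bf f ζ) (t, x) :=
    diffAt_of_smOn (isOpen_U hf) (smOn_Bf hf (isOpen_U hf) (fun _ h => h) ζ) hz
  refine sliceX_unique hBdiff ?_
  have hslice := (hW.inner ℝ (hk.sub (hasDerivAt_const x ζ))).sub (hV.inner ℝ hν)
  simp only [sub_zero] at hslice
  exact hslice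

lemma core2 (lam : ℝ) (ζ : En n) (t x : ℝ) (hz : A1 f (t, x) ≠ 0)
    (hVt : ⟪B1 f (t, x), tv f (t, x)⟫ = 0)
    (hVx : ⟪B2 f (t, x), tv f (t, x)⟫ + ⟪B1 f (t, x), Dx (tv f) (t, x)⟫ = 0)
    (hfl : B1 f (t, x) = -n2k f (t, x) - ((1/2) * ‖kv f (t, x)‖ ^ 2) • kv f (t, x)
      + lam • kv f (t, x)) :
    ⟪ktv f (t, x), kv f (t, x)⟫ * vv f (t, x) - ⟪ktv f (t, x), ζ⟫ * vv f (t, x)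
        + ((1/2) * ‖kv f (t, x)‖ ^ 2 - ⟪kv f (t, x), ζ⟫ + lam) * ⟪tv f (t, x), B2 f (t, x)⟫
      = Dx (Bf f ζ) (t, x) - ‖B1 f (t, x)‖ ^ 2 * vv f (t, x) := by
  set z : ℝ × ℝ := (t, x) with hzd
  set v : ℝ := vv f z with hvd
  set τ : En n := tv f z with hτd
  set κ : En n := kv f z with hκd
  set ν : En n := nk f z with hνd
  set μ : En n := n2k f z with hμd
  set W : En n := Wv f z with hWd
  set V : En n := B1 f z with hVd
  set Vx : En n := B2 f z with hVxd
  set Dτ : En n := Dx (tv f) z with hDτd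
  set Dκ : En n := Dx (kv f) z with hDκd
  set Dν : En n := Dx (nk f) z with hDνd
  set DW : En n := Dx (Wv f) z with hDWd
  have hN : ‖A1 f z‖ ≠ 0 := norm_ne_zero_iff.mpr hz
  have hv0 : v ≠ 0 := hN
  -- decompositions
  have hdτ : Dτ = v • κ := by
    rw [hκd, kv, smul_smul, hvd, vv, mul_inv_cancel₀ hN, one_smul, hDτd]
  have hdκ : v • ν + ⟪Dκ, τ⟫ • τ = Dκ := decomp hN _ _
  have hdν : v • μ + ⟪Dν, τ⟫ • τ = Dν := decomp hN _ _
  have hdVx : v • W + ⟪Vx, τ⟫ • τ = Vx := decomp hN _ _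
  -- orthogonality
  have hWτ : ⟪W, τ⟫ = 0 := inner_Wv_tv hz
  have hντ : ⟪ν, τ⟫ = 0 := inner_nk_tv hz
  have hκτ : ⟪τ, κ⟫ = 0 := inner_tv_kv hf hz
  -- consequences
  have hVxτ : ⟪Vx, τ⟫ = -(v * ⟪V, κ⟫) := by
    have h1 : ⟪V, Dτ⟫ = v * ⟪V, κ⟫ := by rw [hdτ, real_inner_smul_right]
    linarith [hVx, h1]
  -- the three inner product reductions
  have e1 : ⟪W, Dκ⟫ = v * ⟪W, ν⟫ := by
    rw [← hdκ, inner_add_right, real_inner_smul_right, real_inner_smul_right, hWτ,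
      mul_zero, add_zero]
  have e2 : ⟪Vx, ν⟫ = v * ⟪W, ν⟫ := by
    rw [← hdVx, inner_add_left, real_inner_smul_left, real_inner_smul_left,
      show ⟪τ, ν⟫ = (0:ℝ) from by rw [real_inner_comm]; exact hντ, mul_zero, add_zero]
  have e3 : ⟪V, Dν⟫ = v * ⟪V, μ⟫ := by
    rw [← hdν, inner_add_right, real_inner_smul_right, real_inner_smul_right, hVt,
      mul_zero, add_zero]
  have hktv : ktv f z = (-(⟪τ, Vx⟫) / v ^ 2) • Dτ + v⁻¹ • DW := rfl
  have e4 : ⟪ktv f z, κ⟫ = (-(⟪τ, Vx⟫) / v ^ 2) * (v * ‖κ‖ ^ 2) + v⁻¹ * ⟪DW, κ⟫ := by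
    rw [hktv, inner_add_left, real_inner_smul_left, real_inner_smul_left, hdτ,
      real_inner_smul_left, real_inner_self_eq_norm_sq]
  have e5 : ⟪ktv f z, ζ⟫ = (-(⟪τ, Vx⟫) / v ^ 2) * (v * ⟪κ, ζ⟫) + v⁻¹ * ⟪DW, ζ⟫ := by
    rw [hktv, inner_add_left, real_inner_smul_left, real_inner_smul_left, hdτ,
      real_inner_smul_left]
  have hτVx : ⟪τ, Vx⟫ = -(v * ⟪V, κ⟫) := by rw [real_inner_comm]; exact hVxτ
  have hμV : ⟪V, μ⟫ = -‖V‖ ^ 2 - ((1/2) * ‖κ‖ ^ 2) * ⟪V, κ⟫ + lam * ⟪V, κ⟫ := by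
    have hμ : μ = -V - ((1/2) * ‖κ‖ ^ 2) • κ + lam • κ := by
      rw [hfl]; module
    rw [hμ, inner_add_right, inner_sub_right, inner_neg_right, real_inner_smul_right,
      real_inner_smul_right, real_inner_self_eq_norm_sq]
    try ring
  rw [show Dx (Bf f ζ) z = (⟪W, Dκ⟫ + ⟪DW, κ - ζ⟫) - (⟪V, Dν⟫ + ⟪Vx, ν⟫)
    from Dx_Bf_eq hf ζ t x hz]
  rw [inner_sub_right, e1, e2, e3, e4, e5, hτVx, hμV]
  field_simp
  ring

lemma coreMain (lam : ℝ) (ζ : En n) (t x : ℝ) (hz : A1 f (t, x) ≠ 0)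
    (hVt : ⟪B1 f (t, x), tv f (t, x)⟫ = 0)
    (hVx : ⟪B2 f (t, x), tv f (t, x)⟫ + ⟪B1 f (t, x), Dx (tv f) (t, x)⟫ = 0)
    (hfl : B1 f (t, x) = -n2k f (t, x) - ((1/2) * ‖kv f (t, x)‖ ^ 2) • kv f (t, x)
      + lam • kv f (t, x)) :
    HasDerivAt (fun u => Gf f lam ζ (u, x))
      (Dx (Bf f ζ) (t, x) - ‖B1 f (t, x)‖ ^ 2 * vv f (t, x)) t := by
  have h1 := core1 hf lam ζ t x hz
  rwa [core2 hf lam ζ t x hz hVt hVx hfl] at h1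

end core

/-- explicit formula for the time derivative of the energy density -/
def GTf (f : ℝ → ℝ → En n) (lam : ℝ) (ζ : En n) : ℝ × ℝ → ℝ := fun z =>
  ⟪ktv f z, kv f z⟫ * vv f z - ⟪ktv f z, ζ⟫ * vv f z
    + ((1/2) * ‖kv f z‖ ^ 2 - ⟪kv f z, ζ⟫ + lam) * ⟪tv f z, B2 f z⟫

section more
variable {U : Set (ℝ × ℝ)}
variable (hf : ContDiff ℝ (⊤ : ℕ∞) (Function.uncurry f)) (hU : IsOpen U)
  (hA : ∀ z ∈ U, A1 f z ≠ 0)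
include hf hU hA

lemma smOn_ktv : ContDiffOn ℝ (⊤ : ℕ∞) (ktv f) U := by
  have h1 : ContDiffOn ℝ (⊤ : ℕ∞) (fun z => -(⟪tv f z, B2 f z⟫) / vv f z ^ 2) U := by
    refine ContDiffOn.div ?_ ?_ ?_
    · exact (ContDiffOn.inner ℝ (smOn_tv hf hU hA) (smoothB2 hf).contDiffOn).neg
    · exact (smOn_vv hf hU hA).pow 2
    · intro z hz
      exact pow_ne_zero 2 (norm_ne_zero_iff.mpr (hA z hz))
  exact (h1.smul (contDiffOn_Dx hU (smOn_tv hf hU hA))).add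
    ((smOn_ivv hf hU hA).smul (contDiffOn_Dx hU (smOn_Wv hf hU hA)))

lemma smOn_GTf (lam : ℝ) (ζ : En n) : ContDiffOn ℝ (⊤ : ℕ∞) (GTf f lam ζ) U := by
  have hk := smOn_kv hf hU hA
  have hkt := smOn_ktv hf hU hA
  have hv := smOn_vv hf hU hA
  refine ContDiffOn.add (ContDiffOn.sub ?_ ?_) (ContDiffOn.mul ?_ ?_)
  · exact (ContDiffOn.inner ℝ hkt hk).mul hv
  · exact (ContDiffOn.inner ℝ hkt contDiffOn_const).mul hv
  · refine ContDiffOn.add (ContDiffOn.sub ?_ ?_) contDiffOn_const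
    · exact contDiffOn_const.mul (((ContDiffOn.inner ℝ hk hk).congr (fun z _ => by
        rw [real_inner_self_eq_norm_sq])))
    · exact ContDiffOn.inner ℝ hk contDiffOn_const
  · exact ContDiffOn.inner ℝ (smOn_tv hf hU hA) (smoothB2 hf).contDiffOn

lemma smOn_DxBf (ζ : En n) : ContDiffOn ℝ (⊤ : ℕ∞) (Dx (Bf f ζ)) U :=
  contDiffOn_Dx hU (smOn_Bf hf hU hA ζ)

end more

/-- extension by continuity from `Ioo 0 1` to `Icc 0 1` -/
lemma ext_closure {g h : ℝ → ℝ} {x₀ : ℝ} (hg : ContinuousAt g x₀) (hh : ContinuousAt h x₀)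
    (he : ∀ y ∈ Set.Ioo (0:ℝ) 1, g y = h y) (hx : x₀ ∈ Set.Icc (0:ℝ) 1) :
    g x₀ = h x₀ := by
  have hcl : x₀ ∈ closure (Set.Ioo (0:ℝ) 1) := by
    rw [closure_Ioo (by norm_num : (0:ℝ) ≠ 1)]; exact hx
  haveI hne : (nhdsWithin x₀ (Set.Ioo (0:ℝ) 1)).NeBot :=
    mem_closure_iff_nhdsWithin_neBot.mp hcl
  have t1 : Filter.Tendsto g (nhdsWithin x₀ (Set.Ioo (0:ℝ) 1)) (nhds (g x₀)) :=
    hg.continuousWithinAt.tendsto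
  have t2 : Filter.Tendsto g (nhdsWithin x₀ (Set.Ioo (0:ℝ) 1)) (nhds (h x₀)) := by
    refine Filter.Tendsto.congr' ?_ hh.continuousWithinAt.tendsto
    exact Filter.eventually_mem_set.mpr self_mem_nhdsWithin |>.mono
      (fun y hy => (he y hy).symm)
  exact tendsto_nhds_unique t1 t2

lemma contAt_sliceR {g : ℝ × ℝ → ℝ} {U : Set (ℝ × ℝ)} {t x : ℝ} (hU : IsOpen U)
    (hg : ContDiffOn ℝ (⊤ : ℕ∞) g U) (hz : (t, x) ∈ U) :
    ContinuousAt (fun y => g (t, y)) x := by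
  have h1 : ContinuousAt g (t, x) :=
    (hg.continuousOn.continuousAt (hU.mem_nhds hz))
  exact h1.comp (Continuous.prodMk_right t).continuousAt

section C3sec
variable (hf : ContDiff ℝ (⊤ : ℕ∞) (Function.uncurry f))
include hf

lemma C3 (lam : ℝ) (ζ : En n) (t : ℝ)
    (hIcc : ∀ x ∈ Set.Icc (0:ℝ) 1, A1 f (t, x) ≠ 0)
    (hNrm : ∀ x ∈ Set.Icc (0:ℝ) 1, ⟪B1 f (t, x), tv f (t, x)⟫ = 0)
    (hFl : ∀ x ∈ Set.Icc (0:ℝ) 1, B1 f (t, x)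
      = -n2k f (t, x) - ((1/2) * ‖kv f (t, x)‖ ^ 2) • kv f (t, x) + lam • kv f (t, x)) :
    ∀ x ∈ Set.Icc (0:ℝ) 1, GTf f lam ζ (t, x)
      = Dx (Bf f ζ) (t, x) - ‖B1 f (t, x)‖ ^ 2 * vv f (t, x) := by
  have hIoo : ∀ x ∈ Set.Ioo (0:ℝ) 1, GTf f lam ζ (t, x)
      = Dx (Bf f ζ) (t, x) - ‖B1 f (t, x)‖ ^ 2 * vv f (t, x) := by
    intro x hx
    have hxI : x ∈ Set.Icc (0:ℝ) 1 := Set.Ioo_subset_Icc_self hx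
    have hz := hIcc x hxI
    -- derivative of the normality identity
    have hVx : ⟪B2 f (t, x), tv f (t, x)⟫ + ⟪B1 f (t, x), Dx (tv f) (t, x)⟫ = 0 := by
      have hsl : HasDerivAt (fun y => ⟪B1 f (t, y), tv f (t, y)⟫)
          (⟪B1 f (t, x), Dx (tv f) (t, x)⟫ + ⟪B2 f (t, x), tv f (t, x)⟫) x :=
        (hasDerivAt_B1x hf t x).inner ℝ (hasDerivAt_sliceX (diffAt_tv hf hz))
      have hev : (fun y => ⟪B1 f (t, y), tv f (t, y)⟫) =ᶠ[nhds x] fun _ => (0:ℝ) := by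
        refine Filter.eventuallyEq_of_mem (isOpen_Ioo.mem_nhds hx) fun y hy => ?_
        exact hNrm y (Set.Ioo_subset_Icc_self hy)
      have h0 : HasDerivAt (fun y => ⟪B1 f (t, y), tv f (t, y)⟫) 0 x :=
        (hasDerivAt_const x (0:ℝ)).congr_of_eventuallyEq hev
      have := hsl.unique h0
      linarith
    exact core2 hf lam ζ t x hz (hNrm x hxI) hVx (hFl x hxI)
  intro x hx
  have hz := hIcc x hx
  set U₀ : Set (ℝ × ℝ) := {z | A1 f z ≠ 0} with hU₀d
  have hU₀ : IsOpen U₀ := isOpen_U hf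
  have hAz : ∀ z ∈ U₀, A1 f z ≠ 0 := fun _ h => h
  refine ext_closure ?_ ?_ hIoo hx
  · exact contAt_sliceR hU₀ (smOn_GTf hf hU₀ hAz lam ζ) hz
  · refine ContinuousAt.sub ?_ ?_
    · exact contAt_sliceR hU₀ (smOn_DxBf hf hU₀ hAz ζ) hz
    · have hB1c : Continuous fun y => B1 f (t, y) :=
        (smoothB1 hf).continuous.comp (Continuous.prodMk_right t)
      have hvc : Continuous fun y => vv f (t, y) :=
        ((smoothA1 hf).continuous.comp (Continuous.prodMk_right t)).norm
      exact ((hB1c.norm.pow 2).mul hvc).continuousAt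

end C3sec

section C2sec
variable (hf : ContDiff ℝ (⊤ : ℕ∞) (Function.uncurry f))
include hf

lemma contOn_slice_Gf {lam : ℝ} {ζ : En n} {s : ℝ} {S : Set ℝ}
    (hS : ∀ x ∈ S, A1 f (s, x) ≠ 0) :
    ContinuousOn (fun x => Gf f lam ζ (s, x)) S := by
  intro x hx
  exact (contAt_sliceR (isOpen_U hf)
    (smOn_Gf hf (isOpen_U hf) (fun _ h => h) lam ζ) (hS x hx)).continuousWithinAt

lemma contOn_slice_GTf {lam : ℝ} {ζ : En n} {s : ℝ} {S : Set ℝ}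
    (hS : ∀ x ∈ S, A1 f (s, x) ≠ 0) :
    ContinuousOn (fun x => GTf f lam ζ (s, x)) S := by
  intro x hx
  exact (contAt_sliceR (isOpen_U hf)
    (smOn_GTf hf (isOpen_U hf) (fun _ h => h) lam ζ) (hS x hx)).continuousWithinAt

lemma C2 (lam : ℝ) (ζ : En n) (t : ℝ) {ε : ℝ} (hε : 0 < ε)
    (hK : ∀ z ∈ Set.Icc (t - ε) (t + ε) ×ˢ Set.Icc (0:ℝ) 1, A1 f z ≠ 0) :
    HasDerivAt (fun s => ∫ x in (0:ℝ)..1, Gf f lam ζ (s, x))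
      (∫ x in (0:ℝ)..1, GTf f lam ζ (t, x)) t := by
  have htI : t ∈ Set.Icc (t - ε) (t + ε) := by
    constructor <;> linarith
  have hball : ∀ s ∈ Metric.ball t ε, s ∈ Set.Icc (t - ε) (t + ε) := by
    intro s hs
    rw [Metric.mem_ball, Real.dist_eq, abs_lt] at hs
    constructor <;> linarith
  have hIoc : (Set.uIoc (0:ℝ) 1) = Set.Ioc (0:ℝ) 1 := Set.uIoc_of_le (by norm_num)
  have hIocIcc : Set.Ioc (0:ℝ) 1 ⊆ Set.Icc (0:ℝ) 1 := Set.Ioc_subset_Icc_self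
  -- bound on the derivative
  obtain ⟨M, hM⟩ : ∃ M, ∀ z ∈ Set.Icc (t - ε) (t + ε) ×ˢ Set.Icc (0:ℝ) 1,
      ‖GTf f lam ζ z‖ ≤ M := by
    refine IsCompact.exists_bound_of_continuousOn (isCompact_Icc.prod isCompact_Icc) ?_
    exact ((smOn_GTf hf (isOpen_U hf) (fun _ h => h) lam ζ).continuousOn).mono
      (fun z hz => hK z hz)
  have key := intervalIntegral.hasDerivAt_integral_of_dominated_loc_of_deriv_le
    (F := fun s x => Gf f lam ζ (s, x)) (F' := fun s x => GTf f lam ζ (s, x))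
    (x₀ := t) (a := (0:ℝ)) (b := 1) (μ := volume) (bound := fun _ => M)
      (s := Metric.ball t ε) (Metric.ball_mem_nhds t hε)
    ?_ ?_ ?_ ?_ ?_ ?_
  · exact key.2
  · filter_upwards [Metric.ball_mem_nhds t hε] with s hs
    refine ContinuousOn.aestronglyMeasurable ?_ measurableSet_uIoc
    rw [hIoc]
    exact contOn_slice_Gf hf (fun x hx => hK (s, x) ⟨hball s hs, hIocIcc hx⟩)
  · refine ContinuousOn.intervalIntegrable ?_
    rw [Set.uIcc_of_le (by norm_num : (0:ℝ) ≤ 1)]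
    exact contOn_slice_Gf hf (fun x hx => hK (t, x) ⟨htI, hx⟩)
  · refine ContinuousOn.aestronglyMeasurable ?_ measurableSet_uIoc
    rw [hIoc]
    exact contOn_slice_GTf hf (fun x hx => hK (t, x) ⟨htI, hIocIcc hx⟩)
  · refine Filter.Eventually.of_forall fun x hx => fun s hs => ?_
    rw [hIoc] at hx
    exact hM (s, x) ⟨hball s hs, hIocIcc hx⟩
  · exact intervalIntegrable_const
  · refine Filter.Eventually.of_forall fun x hx => fun s hs => ?_
    rw [hIoc] at hx
    exact core1 hf lam ζ s x (hK (s, x) ⟨hball s hs, hIocIcc hx⟩)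

end C2sec


section assemble
variable (hf : ContDiff ℝ (⊤ : ℕ∞) (Function.uncurry f))
include hf

lemma FTCB (ζ : En n) (t : ℝ) (hIcc : ∀ x ∈ Set.Icc (0:ℝ) 1, A1 f (t, x) ≠ 0) :
    ∫ x in (0:ℝ)..1, Dx (Bf f ζ) (t, x) = Bf f ζ (t, 1) - Bf f ζ (t, 0) := by
  have huIcc : Set.uIcc (0:ℝ) 1 = Set.Icc (0:ℝ) 1 := Set.uIcc_of_le (by norm_num)
  refine intervalIntegral.integral_eq_sub_of_hasDerivAt
    (f := fun y => Bf f ζ (t, y)) (f' := fun y => Dx (Bf f ζ) (t, y)) (fun x hx => ?_) ?_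
  · rw [huIcc] at hx
    exact hasDerivAt_sliceX (diffAt_of_smOn (isOpen_U hf)
      (smOn_Bf hf (isOpen_U hf) (fun _ h => h) ζ) (hIcc x hx))
  · refine ContinuousOn.intervalIntegrable ?_
    rw [huIcc]
    intro x hx
    exact (contAt_sliceR (isOpen_U hf)
      (smOn_DxBf hf (isOpen_U hf) (fun _ h => h) ζ) (hIcc x hx)).continuousWithinAt

lemma WH_eq (lam : ℝ) (ζ : En n) (s : ℝ)
    (hIcc : ∀ x ∈ Set.Icc (0:ℝ) 1, A1 f (s, x) ≠ 0) :
    WH lam ζ (f s) = ∫ x in (0:ℝ)..1, Gf f lam ζ (s, x) := by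
  have huIcc : Set.uIcc (0:ℝ) 1 = Set.Icc (0:ℝ) 1 := Set.uIcc_of_le (by norm_num)
  have h1 : (∫ x in (0:ℝ)..1, ((1/2) * ‖curv (f s) x‖ ^ 2 - ⟪curv (f s) x, ζ⟫)
      * ‖deriv (f s) x‖) = ∫ x in (0:ℝ)..1, Gf f 0 ζ (s, x) := by
    refine intervalIntegral.integral_congr fun x hx => ?_
    rw [huIcc] at hx
    rw [curv_eq hf (hIcc x hx), deriv_fx hf, Gf, add_zero]
    rfl
  have h2 : len (f s) = ∫ x in (0:ℝ)..1, vv f (s, x) := by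
    refine intervalIntegral.integral_congr fun x hx => ?_
    rw [deriv_fx hf]
    rfl
  have hint1 : IntervalIntegrable (fun x => Gf f 0 ζ (s, x)) volume 0 1 := by
    refine ContinuousOn.intervalIntegrable ?_
    rw [huIcc]
    exact contOn_slice_Gf hf hIcc
  have hint2 : IntervalIntegrable (fun x => lam * vv f (s, x)) volume 0 1 := by
    refine ContinuousOn.intervalIntegrable ?_
    exact (continuous_const.mul
      (((smoothA1 hf).continuous.comp (Continuous.prodMk_right s)).norm)).continuousOn
  rw [WH, h1, h2, ← intervalIntegral.integral_const_mul,
    ← intervalIntegral.integral_add hint1 hint2]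
  refine intervalIntegral.integral_congr fun x hx => ?_
  show Gf f 0 ζ (s, x) + lam * vv f (s, x) = Gf f lam ζ (s, x)
  rw [Gf, Gf]
  ring

lemma B_bd (ζ : En n) (t x : ℝ) (hz : A1 f (t, x) ≠ 0) (hV0 : B1 f (t, x) = 0)
    (hκ : kv f (t, x) = ζ - ⟪ζ, tv f (t, x)⟫ • tv f (t, x)) : Bf f ζ (t, x) = 0 := by
  rw [Bf, hV0, inner_zero_left, sub_zero, hκ, sub_sub_cancel_left, inner_neg_right,
    real_inner_smul_right, inner_Wv_tv hz]
  ring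

lemma V_bd (T t x : ℝ) (c : En n) (hconst : ∀ u ∈ Set.Ico (0:ℝ) T, f u x = c)
    (ht : t ∈ Set.Ico (0:ℝ) T) : B1 f (t, x) = 0 := by
  have hud : UniqueDiffOn ℝ (Set.Ico (0:ℝ) T) := by
    refine uniqueDiffOn_convex (convex_Ico 0 T) ?_
    rw [interior_Ico]
    exact Set.nonempty_Ioo.mpr (lt_of_le_of_lt ht.1 ht.2)
  have h1 : HasDerivWithinAt (fun u => f u x) (B1 f (t, x)) (Set.Ico 0 T) t :=
    (hasDerivAt_ft hf t x).hasDerivWithinAt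
  have h2 : HasDerivWithinAt (fun u => f u x) 0 (Set.Ico 0 T) t :=
    (hasDerivWithinAt_const t _ c).congr (fun u hu => hconst u hu) (hconst t ht)
  rw [← h1.derivWithin (hud t ht), h2.derivWithin (hud t ht)]

lemma rect (t : ℝ) (hIcc : ∀ x ∈ Set.Icc (0:ℝ) 1, A1 f (t, x) ≠ 0) :
    ∃ ε > 0, ∀ z ∈ Set.Icc (t - ε) (t + ε) ×ˢ Set.Icc (0:ℝ) 1, A1 f z ≠ 0 := by
  have hK : IsCompact (({t} : Set ℝ) ×ˢ Set.Icc (0:ℝ) 1) :=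
    isCompact_singleton.prod isCompact_Icc
  have hsub : ({t} : Set ℝ) ×ˢ Set.Icc (0:ℝ) 1 ⊆ {z | A1 f z ≠ 0} := by
    rintro ⟨s, x⟩ ⟨hs, hx⟩
    rw [Set.mem_singleton_iff] at hs
    subst hs
    exact hIcc x hx
  obtain ⟨δ, hδpos, hδ⟩ := hK.exists_cthickening_subset_open (isOpen_U hf) hsub
  refine ⟨δ, hδpos, fun z hz => ?_⟩
  obtain ⟨hz1, hz2⟩ := hz
  refine hδ (Metric.mem_cthickening_of_dist_le z (t, z.2) δ _ ⟨rfl, hz2⟩ ?_)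
  rw [Prod.dist_eq]
  simp only [Real.dist_eq, dist_self]
  rw [max_le_iff]
  obtain ⟨h1, h2⟩ := hz1
  constructor
  · rw [abs_le]
    constructor <;> simp at h1 h2 ⊢ <;> linarith
  · linarith

end assemble


/-- The Willmore–Helfrich energy is non-increasing along the flow with natural
boundary conditions: `(d/dt) W_λ(f(t)) = -∫ |∂ₜf|² ds ≤ 0`. -/
theorem energy_decreases (n : ℕ) (hn : 2 ≤ n) (lam : ℝ) (hlam : 0 ≤ lam)
    (ζ fminus fplus : En n)
    (T : ℝ) (hT : 0 < T)
    (f : ℝ → ℝ → En n)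
    (hsmooth : ContDiff ℝ (⊤ : ℕ∞) (Function.uncurry f))
    (hreg : ∀ t ∈ Set.Ico (0:ℝ) T, ∀ x ∈ Set.Icc (0:ℝ) 1, deriv (f t) x ≠ 0)
    (hflow : ∀ t ∈ Set.Ico (0:ℝ) T, ∀ x ∈ Set.Icc (0:ℝ) 1,
      pT f t x = -nSIter (f t) 2 (curv (f t)) x
        - ((1/2) * ‖curv (f t) x‖ ^ 2) • curv (f t) x + lam • curv (f t) x)
    (hbd₀ : ∀ t ∈ Set.Ico (0:ℝ) T, f t 0 = fminus)
    (hbd₁ : ∀ t ∈ Set.Ico (0:ℝ) T, f t 1 = fplus)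
    (hnat : ∀ t ∈ Set.Ico (0:ℝ) T, ∀ x ∈ ({0, 1} : Set ℝ),
      curv (f t) x = ζ - ⟪ζ, tang (f t) x⟫ • tang (f t) x) :
    ∀ t ∈ Set.Ico (0:ℝ) T,
      HasDerivAt (fun s => WH lam ζ (f s))
        (-(∫ x in (0:ℝ)..1, ‖pT f t x‖ ^ 2 * ‖deriv (f t) x‖)) t ∧
      -(∫ x in (0:ℝ)..1, ‖pT f t x‖ ^ 2 * ‖deriv (f t) x‖) ≤ 0 := by
  intro t ht
  have huIcc : Set.uIcc (0:ℝ) 1 = Set.Icc (0:ℝ) 1 := Set.uIcc_of_le (by norm_num)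
  have hA : ∀ x ∈ Set.Icc (0:ℝ) 1, A1 f (t, x) ≠ 0 := fun x hx => by
    rw [← deriv_fx hsmooth]
    exact hreg t ht x hx
  have h0mem : (0:ℝ) ∈ Set.Icc (0:ℝ) 1 := by norm_num
  have h1mem : (1:ℝ) ∈ Set.Icc (0:ℝ) 1 := by norm_num
  constructor
  · -- the derivative formula
    obtain ⟨ε, hεpos, hK⟩ := rect hsmooth t hA
    have hC2 := C2 hsmooth lam ζ t hεpos hK
    -- translate the flow equation
    have hFl : ∀ x ∈ Set.Icc (0:ℝ) 1, B1 f (t, x)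
        = -n2k f (t, x) - ((1/2) * ‖kv f (t, x)‖ ^ 2) • kv f (t, x)
          + lam • kv f (t, x) := by
      intro x hx
      have hz := hA x hx
      have h := hflow t ht x hx
      rw [pT_eq hsmooth, nS2_curv_eq hsmooth hz, curv_eq hsmooth hz] at h
      exact h
    have hNrm : ∀ x ∈ Set.Icc (0:ℝ) 1, ⟪B1 f (t, x), tv f (t, x)⟫ = 0 := by
      intro x hx
      have hz := hA x hx
      have hκτ : ⟪kv f (t, x), tv f (t, x)⟫ = 0 := by
        rw [real_inner_comm]
        exact inner_tv_kv hsmooth hz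
      rw [hFl x hx, inner_add_left, inner_sub_left, inner_neg_left,
        real_inner_smul_left, real_inner_smul_left, inner_n2k_tv hz, hκτ]
      ring
    have hC3 := C3 hsmooth lam ζ t hA hNrm hFl
    -- integrability facts at time t
    have hint1 : IntervalIntegrable (fun x => Dx (Bf f ζ) (t, x)) volume 0 1 := by
      refine ContinuousOn.intervalIntegrable ?_
      rw [huIcc]
      intro x hx
      exact (contAt_sliceR (isOpen_U hsmooth)
        (smOn_DxBf hsmooth (isOpen_U hsmooth) (fun _ h => h) ζ) (hA x hx)).continuousWithinAt
    have hint2 : IntervalIntegrable (fun x => ‖B1 f (t, x)‖ ^ 2 * vv f (t, x)) volume 0 1 := by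
      refine ContinuousOn.intervalIntegrable ?_
      have hB1c : Continuous fun x => B1 f (t, x) :=
        (smoothB1 hsmooth).continuous.comp (Continuous.prodMk_right t)
      have hvc : Continuous fun x => vv f (t, x) :=
        ((smoothA1 hsmooth).continuous.comp (Continuous.prodMk_right t)).norm
      exact ((hB1c.norm.pow 2).mul hvc).continuousOn
    -- value of the derivative
    have hGT : (∫ x in (0:ℝ)..1, GTf f lam ζ (t, x))
        = (∫ x in (0:ℝ)..1, Dx (Bf f ζ) (t, x))
          - ∫ x in (0:ℝ)..1, ‖B1 f (t, x)‖ ^ 2 * vv f (t, x) := by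
      rw [← intervalIntegral.integral_sub hint1 hint2]
      refine intervalIntegral.integral_congr fun x hx => ?_
      rw [huIcc] at hx
      exact hC3 x hx
    have hFTC := FTCB hsmooth ζ t hA
    have hκ0 : kv f (t, 0) = ζ - ⟪ζ, tv f (t, 0)⟫ • tv f (t, 0) := by
      have h := hnat t ht 0 (by simp)
      rwa [curv_eq hsmooth (hA 0 h0mem), tang_eq hsmooth] at h
    have hκ1 : kv f (t, 1) = ζ - ⟪ζ, tv f (t, 1)⟫ • tv f (t, 1) := by
      have h := hnat t ht 1 (by simp)
      rwa [curv_eq hsmooth (hA 1 h1mem), tang_eq hsmooth] at h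
    have hB0 : Bf f ζ (t, 0) = 0 :=
      B_bd hsmooth ζ t 0 (hA 0 h0mem)
        (V_bd hsmooth T t 0 fminus (fun u hu => hbd₀ u hu) ht) hκ0
    have hB1e : Bf f ζ (t, 1) = 0 :=
      B_bd hsmooth ζ t 1 (hA 1 h1mem)
        (V_bd hsmooth T t 1 fplus (fun u hu => hbd₁ u hu) ht) hκ1
    have hval : (∫ x in (0:ℝ)..1, GTf f lam ζ (t, x))
        = -(∫ x in (0:ℝ)..1, ‖pT f t x‖ ^ 2 * ‖deriv (f t) x‖) := by
      rw [hGT, hFTC, hB0, hB1e]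
      rw [show (0:ℝ) - 0 - (∫ x in (0:ℝ)..1, ‖B1 f (t, x)‖ ^ 2 * vv f (t, x))
        = -(∫ x in (0:ℝ)..1, ‖B1 f (t, x)‖ ^ 2 * vv f (t, x)) by ring]
      congr 1
      refine intervalIntegral.integral_congr fun x hx => ?_
      rw [pT_eq hsmooth, deriv_fx hsmooth]
      rfl
    rw [← hval]
    refine hC2.congr_of_eventuallyEq ?_
    filter_upwards [Metric.ball_mem_nhds t hεpos] with s hs
    refine WH_eq hsmooth lam ζ s fun x hx => ?_
    refine hK (s, x) ⟨?_, hx⟩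
    rw [Metric.mem_ball, Real.dist_eq, abs_lt] at hs
    constructor <;> simp <;> linarith
  · -- non-positivity
    refine neg_nonpos.mpr (intervalIntegral.integral_nonneg (by norm_num) fun x _ => ?_)
    positivity

end
end

section
/- Let f : [0,T) × [0,1] → ℝⁿ be smooth with f(t,·) regular for each t, write ∂ₜf = V + φτ with V the normal velocity and φ = ⟨∂ₜf, τ⟩, and let ψ be a smooth normal vector field along f (⟨ψ, τ⟩ ≡ 0). Then (∇ₜ∇ₛ − ∇ₛ∇ₜ)ψ = (⟨κ, V⟩ − ∂ₛφ)∇ₛψ + ⟨κ, ψ⟩∇ₛV − ⟨∇ₛV, ψ⟩κ. -/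
open scoped RealInnerProductSpace
open MeasureTheory

noncomputable section

variable {n : ℕ}

section Helpers

variable {E : Type*} [NormedAddCommGroup E] [NormedSpace ℝ E]

/-- First partial derivative of a function on `ℝ × ℝ`. -/
def pd1 (G : ℝ × ℝ → E) : ℝ × ℝ → E := fun p => fderiv ℝ G p (1, 0)

/-- Second partial derivative of a function on `ℝ × ℝ`. -/
def pd2 (G : ℝ × ℝ → E) : ℝ × ℝ → E := fun p => fderiv ℝ G p (0, 1)

theorem contDiff_pd1 {G : ℝ × ℝ → E} (hG : ContDiff ℝ (⊤:ℕ∞) G) : ContDiff ℝ (⊤:ℕ∞) (pd1 G) := by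
  have h := (hG.fderiv_right (m := ((⊤:ℕ∞) : WithTop ℕ∞)) (by norm_cast))
  exact (ContinuousLinearMap.apply ℝ E ((1:ℝ),(0:ℝ))).contDiff.comp h

theorem contDiff_pd2 {G : ℝ × ℝ → E} (hG : ContDiff ℝ (⊤:ℕ∞) G) : ContDiff ℝ (⊤:ℕ∞) (pd2 G) := by
  have h := (hG.fderiv_right (m := ((⊤:ℕ∞) : WithTop ℕ∞)) (by norm_cast))
  exact (ContinuousLinearMap.apply ℝ E ((0:ℝ),(1:ℝ))).contDiff.comp h

theorem hasDerivAt_pd2 {G : ℝ × ℝ → E} (hG : ContDiff ℝ (⊤:ℕ∞) G) (t x : ℝ) :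
    HasDerivAt (fun y => G (t, y)) (pd2 G (t, x)) x := by
  have h1 : HasFDerivAt G (fderiv ℝ G (t, x)) (t, x) :=
    (hG.differentiable (by norm_cast) (t, x)).hasFDerivAt
  have h2 : HasDerivAt (fun y : ℝ => ((t, y) : ℝ × ℝ)) ((0:ℝ), (1:ℝ)) x := by
    have := ((hasDerivAt_const x t).prodMk (hasDerivAt_id x))
    simpa using this
  simpa [pd2, Function.comp_def] using (h1.comp_hasDerivAt x h2)

theorem hasDerivAt_pd1 {G : ℝ × ℝ → E} (hG : ContDiff ℝ (⊤:ℕ∞) G) (t x : ℝ) :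
    HasDerivAt (fun s => G (s, x)) (pd1 G (t, x)) t := by
  have h1 : HasFDerivAt G (fderiv ℝ G (t, x)) (t, x) :=
    (hG.differentiable (by norm_cast) (t, x)).hasFDerivAt
  have h2 : HasDerivAt (fun s : ℝ => ((s, x) : ℝ × ℝ)) ((1:ℝ), (0:ℝ)) t := by
    have := ((hasDerivAt_id t).prodMk (hasDerivAt_const t x))
    simpa using this
  simpa [pd1, Function.comp_def] using (h1.comp_hasDerivAt t h2)

/-- Equality of mixed partial derivatives (Clairaut/Schwarz). -/
theorem pd_comm {G : ℝ × ℝ → E} (hG : ContDiff ℝ (⊤:ℕ∞) G) (p : ℝ × ℝ) :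
    pd1 (pd2 G) p = pd2 (pd1 G) p := by
  have hsymm : IsSymmSndFDerivAt ℝ G p := by
    have : ContDiffAt ℝ 2 G p := (hG.of_le (by norm_cast)).contDiffAt
    exact this.isSymmSndFDerivAt (by simp)
  have hd : ContDiff ℝ (⊤:ℕ∞) (fderiv ℝ G) :=
    hG.fderiv_right (m := ((⊤:ℕ∞) : WithTop ℕ∞)) (by norm_cast)
  have e1 : ∀ v w : ℝ × ℝ, fderiv ℝ (fun q => fderiv ℝ G q w) p v
      = fderiv ℝ (fderiv ℝ G) p v w := by
    intro v w
    have : (fun q => fderiv ℝ G q w)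
        = (ContinuousLinearMap.apply ℝ E w) ∘ (fderiv ℝ G) := rfl
    rw [this, fderiv_comp]
    · simp
    · exact (ContinuousLinearMap.apply ℝ E w).differentiableAt
    · exact hd.differentiable (by norm_cast) p
  show fderiv ℝ (fun q => fderiv ℝ G q (0,1)) p (1,0)
      = fderiv ℝ (fun q => fderiv ℝ G q (1,0)) p (0,1)
  rw [e1, e1]
  exact hsymm _ _

end Helpers

section EnHelpers

variable {m : ℕ}

theorem hasDerivAt_invnorm {A : ℝ → En m} {a' : En m} {x : ℝ}
    (hA : HasDerivAt A a' x) (h0 : A x ≠ 0) :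
    HasDerivAt (fun y => ‖A y‖⁻¹) (-(⟪a', A x⟫ / ‖A x‖ ^ 3)) x := by
  have hsq : HasDerivAt (fun y => ‖A y‖ ^ 2) (2 * ⟪A x, a'⟫) x := hA.norm_sq
  have hpos : (0:ℝ) < ‖A x‖ := norm_pos_iff.2 h0
  have hnz : ‖A x‖ ^ 2 ≠ 0 := by positivity
  have hsqrt : HasDerivAt (fun y => Real.sqrt (‖A y‖ ^ 2))
      (1 / (2 * Real.sqrt (‖A x‖ ^ 2)) * (2 * ⟪A x, a'⟫)) x :=
    (Real.hasDerivAt_sqrt hnz).comp x hsq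
  have heq : (fun y => Real.sqrt (‖A y‖ ^ 2)) = fun y => ‖A y‖ := by
    funext y; exact Real.sqrt_sq (norm_nonneg _)
  rw [heq] at hsqrt
  have hnrm : HasDerivAt (fun y => ‖A y‖) (⟪a', A x⟫ / ‖A x‖) x := by
    convert hsqrt using 1
    rw [Real.sqrt_sq (norm_nonneg _), real_inner_comm]
    field_simp
  have : HasDerivAt (fun y => ‖A y‖⁻¹) _ x := hnrm.inv (ne_of_gt hpos)
  convert this using 1
  rw [neg_div, div_div]
  ring_nf

/-- The derivative value produced by differentiating the normal projection. -/
def projD (v : ℝ) (a α g γ : En m) : En m :=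
  γ - ((⟪g, (-(⟪α, a⟫ / v ^ 3)) • a + v⁻¹ • α⟫ + ⟪γ, v⁻¹ • a⟫) • (v⁻¹ • a)
      + ⟪g, v⁻¹ • a⟫ • ((-(⟪α, a⟫ / v ^ 3)) • a + v⁻¹ • α))

theorem hasDerivAt_proj {A G : ℝ → En m} {a' g' : En m} {x : ℝ}
    (hA : HasDerivAt A a' x) (hG : HasDerivAt G g' x) (h0 : A x ≠ 0) :
    HasDerivAt (fun y => G y - ⟪G y, ‖A y‖⁻¹ • A y⟫ • (‖A y‖⁻¹ • A y))
      (projD ‖A x‖ (A x) a' (G x) g') x := by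
  have hτ : HasDerivAt (fun y => ‖A y‖⁻¹ • A y)
      ((‖A x‖⁻¹) • a' + (-(⟪a', A x⟫ / ‖A x‖ ^ 3)) • A x) x :=
    (hasDerivAt_invnorm hA h0).smul hA
  have hμ : HasDerivAt (fun y => ⟪G y, ‖A y‖⁻¹ • A y⟫)
      (⟪G x, (‖A x‖⁻¹) • a' + (-(⟪a', A x⟫ / ‖A x‖ ^ 3)) • A x⟫
        + ⟪g', ‖A x‖⁻¹ • A x⟫) x := hG.inner ℝ hτ
  have h : HasDerivAt (fun y => G y - ⟪G y, ‖A y‖⁻¹ • A y⟫ • (‖A y‖⁻¹ • A y)) _ x :=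
    hG.sub (hμ.smul hτ)
  unfold projD
  convert h using 1
  rw [add_comm ((‖A x‖⁻¹) • a') ((-(⟪a', A x⟫ / ‖A x‖ ^ 3)) • A x)] at *
  abel_nf

end EnHelpers


set_option maxHeartbeats 1000000 in
theorem core (v : ℝ) (hv : v ≠ 0) (a b c d p px pt q : En m)
    (iaa : ⟪a, a⟫ = v ^ 2) (iap : ⟪p, a⟫ = 0)
    (ipx : ⟪px, a⟫ = -⟪p, c⟫) (ipt : ⟪pt, a⟫ = -⟪p, d⟫) :
    projD v a d (v⁻¹ • px) (v⁻¹ • q + (-(⟪d, a⟫ / v ^ 3)) • px)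
      - ⟪projD v a d (v⁻¹ • px) (v⁻¹ • q + (-(⟪d, a⟫ / v ^ 3)) • px), v⁻¹ • a⟫ • (v⁻¹ • a)
      - (v⁻¹ • projD v a c pt q - ⟪v⁻¹ • projD v a c pt q, v⁻¹ • a⟫ • (v⁻¹ • a))
    = (⟪v⁻¹ • (v⁻¹ • c + (-(⟪c, a⟫ / v ^ 3)) • a), b - ⟪b, v⁻¹ • a⟫ • (v⁻¹ • a)⟫
        - v⁻¹ * (⟪b, v⁻¹ • c + (-(⟪c, a⟫ / v ^ 3)) • a⟫ + ⟪d, v⁻¹ • a⟫))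
        • (v⁻¹ • px - ⟪v⁻¹ • px, v⁻¹ • a⟫ • (v⁻¹ • a))
      + ⟪v⁻¹ • (v⁻¹ • c + (-(⟪c, a⟫ / v ^ 3)) • a), p⟫
        • (v⁻¹ • projD v a c b d - ⟪v⁻¹ • projD v a c b d, v⁻¹ • a⟫ • (v⁻¹ • a))
      - ⟪v⁻¹ • projD v a c b d - ⟪v⁻¹ • projD v a c b d, v⁻¹ • a⟫ • (v⁻¹ • a), p⟫
        • (v⁻¹ • (v⁻¹ • c + (-(⟪c, a⟫ / v ^ 3)) • a)) := by
  have iap' : ⟪a, p⟫ = 0 := by rw [real_inner_comm]; exact iap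
  have ipx' : ⟪a, px⟫ = -⟪c, p⟫ := by
    rw [real_inner_comm px a, real_inner_comm p c]; exact ipx
  have ipt' : ⟪a, pt⟫ = -⟪d, p⟫ := by
    rw [real_inner_comm pt a, real_inner_comm p d]; exact ipt
  unfold projD
  simp only [inner_sub_left, inner_sub_right, inner_add_left, inner_add_right,
    real_inner_smul_left, real_inner_smul_right, inner_neg_left, inner_neg_right,
    real_inner_comm a b, real_inner_comm a c, real_inner_comm a d,
    real_inner_comm a p, real_inner_comm a px, real_inner_comm a pt, real_inner_comm a q,
    real_inner_comm b c, real_inner_comm b d, real_inner_comm b p,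
    real_inner_comm b px, real_inner_comm b pt, real_inner_comm b q,
    real_inner_comm c d, real_inner_comm c p, real_inner_comm c px,
    real_inner_comm c pt, real_inner_comm c q,
    real_inner_comm d p, real_inner_comm d px, real_inner_comm d pt, real_inner_comm d q,
    real_inner_comm p px, real_inner_comm p pt, real_inner_comm p q,
    real_inner_comm px pt, real_inner_comm px q, real_inner_comm pt q,
    iaa, iap, iap', ipx, ipx', ipt, ipt']
  match_scalars <;> field_simp <;> ring

/-- Commutator of `∇ₜ` and `∇ₛ` on a normal vector field `ψ` along the flow
`∂ₜf = V + φτ`: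
`(∇ₜ∇ₛ - ∇ₛ∇ₜ)ψ = (⟨κ,V⟩ - ∂ₛφ)∇ₛψ + ⟨κ,ψ⟩∇ₛV - ⟨∇ₛV,ψ⟩κ`. -/
theorem commutator_nabla_t_nabla_s (n : ℕ) (hn : 2 ≤ n)
    (T : ℝ) (hT : 0 < T)
    (f : ℝ → ℝ → En n)
    (hsmooth : ContDiff ℝ (⊤ : ℕ∞) (Function.uncurry f))
    (hreg : ∀ t ∈ Set.Ico (0:ℝ) T, ∀ x ∈ Set.Icc (0:ℝ) 1, deriv (f t) x ≠ 0)
    (ψ : ℝ → ℝ → En n)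
    (hψsmooth : ContDiff ℝ (⊤ : ℕ∞) (Function.uncurry ψ))
    (hψnormal : ∀ t ∈ Set.Ico (0:ℝ) T, ∀ x ∈ Set.Icc (0:ℝ) 1,
      ⟪ψ t x, tang (f t) x⟫ = 0) :
    ∀ t ∈ Set.Ioo (0:ℝ) T, ∀ x ∈ Set.Ioo (0:ℝ) 1,
      nT f (nSF f ψ) t x - nSF f (nT f ψ) t x
        = (⟪curv (f t) x, normVel f t x⟫ - aDS (f t) (tanComp f t) x) • nSF f ψ t x
          + ⟪curv (f t) x, ψ t x⟫ • nS (f t) (normVel f t) x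
          - ⟪nS (f t) (normVel f t) x, ψ t x⟫ • curv (f t) x := by
  intro t ht x hx
  have hF : ContDiff ℝ (⊤:ℕ∞) (Function.uncurry f) := hsmooth
  have hΨ : ContDiff ℝ (⊤:ℕ∞) (Function.uncurry ψ) := hψsmooth
  set F : ℝ × ℝ → En n := Function.uncurry f with hFdef
  set Ψ : ℝ × ℝ → En n := Function.uncurry ψ with hΨdef
  -- identification of derivatives with partial derivatives
  have E1 : ∀ s y, deriv (f s) y = pd2 F (s, y) := fun s y =>
    (hasDerivAt_pd2 hF s y).deriv
  have E2 : ∀ s y, deriv (ψ s) y = pd2 Ψ (s, y) := fun s y =>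
    (hasDerivAt_pd2 hΨ s y).deriv
  have E3 : ∀ s y, pT f s y = pd1 F (s, y) := fun s y =>
    (hasDerivAt_pd1 hF s y).deriv
  have E4 : ∀ s y, pT ψ s y = pd1 Ψ (s, y) := fun s y =>
    (hasDerivAt_pd1 hΨ s y).deriv
  have htx : t ∈ Set.Ico (0:ℝ) T := ⟨le_of_lt ht.1, ht.2⟩
  have hxx : x ∈ Set.Icc (0:ℝ) 1 := ⟨le_of_lt hx.1, le_of_lt hx.2⟩
  have h0 : pd2 F (t, x) ≠ 0 := by rw [← E1]; exact hreg t htx x hxx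
  have hv : ‖pd2 F (t, x)‖ ≠ 0 := norm_ne_zero_iff.2 h0
  -- second-order derivative facts
  have haX : HasDerivAt (fun y => pd2 F (t, y)) (pd2 (pd2 F) (t, x)) x :=
    hasDerivAt_pd2 (contDiff_pd2 hF) t x
  have haT : HasDerivAt (fun s => pd2 F (s, x)) (pd1 (pd2 F) (t, x)) t :=
    hasDerivAt_pd1 (contDiff_pd2 hF) t x
  have hbX : HasDerivAt (fun y => pd1 F (t, y)) (pd1 (pd2 F) (t, x)) x := by
    have h := hasDerivAt_pd2 (contDiff_pd1 hF) t x
    rwa [← pd_comm hF] at h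
  have hpxT : HasDerivAt (fun s => pd2 Ψ (s, x)) (pd1 (pd2 Ψ) (t, x)) t :=
    hasDerivAt_pd1 (contDiff_pd2 hΨ) t x
  have hptX : HasDerivAt (fun y => pd1 Ψ (t, y)) (pd1 (pd2 Ψ) (t, x)) x := by
    have h := hasDerivAt_pd2 (contDiff_pd1 hΨ) t x
    rwa [← pd_comm hΨ] at h
  have hψX : HasDerivAt (fun y => ψ t y) (pd2 Ψ (t, x)) x := hasDerivAt_pd2 hΨ t x
  have hψT : HasDerivAt (fun s => ψ s x) (pd1 Ψ (t, x)) t := hasDerivAt_pd1 hΨ t x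
  -- normality relations
  have hn0 : ∀ s ∈ Set.Ico (0:ℝ) T, ∀ y ∈ Set.Icc (0:ℝ) 1,
      ⟪ψ s y, pd2 F (s, y)⟫ = 0 := by
    intro s hs y hy
    have h1 := hψnormal s hs y hy
    have h2 : tang (f s) y = ‖pd2 F (s, y)‖⁻¹ • pd2 F (s, y) := by
      simp only [tang, aD, E1]
    rw [h2, real_inner_smul_right] at h1
    have hne : pd2 F (s, y) ≠ 0 := by rw [← E1]; exact hreg s hs y hy
    have hinv : (‖pd2 F (s, y)‖⁻¹ : ℝ) ≠ 0 := inv_ne_zero (norm_ne_zero_iff.2 hne)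
    exact (mul_eq_zero.1 h1).resolve_left hinv
  have iaa : ⟪pd2 F (t, x), pd2 F (t, x)⟫ = ‖pd2 F (t, x)‖ ^ 2 :=
    real_inner_self_eq_norm_sq _
  have iap : ⟪ψ t x, pd2 F (t, x)⟫ = 0 := hn0 t htx x hxx
  have ipx : ⟪pd2 Ψ (t, x), pd2 F (t, x)⟫ = -⟪ψ t x, pd2 (pd2 F) (t, x)⟫ := by
    have hD : HasDerivAt (fun y => ⟪ψ t y, pd2 F (t, y)⟫)
        (⟪ψ t x, pd2 (pd2 F) (t, x)⟫ + ⟪pd2 Ψ (t, x), pd2 F (t, x)⟫) x :=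
      hψX.inner ℝ haX
    have hEv : (fun y => ⟪ψ t y, pd2 F (t, y)⟫) =ᶠ[nhds x] fun _ => (0:ℝ) := by
      filter_upwards [Ioo_mem_nhds hx.1 hx.2] with y hy
      exact hn0 t htx y ⟨le_of_lt hy.1, le_of_lt hy.2⟩
    have hZ : HasDerivAt (fun y => ⟪ψ t y, pd2 F (t, y)⟫) 0 x :=
      (hasDerivAt_const x (0:ℝ)).congr_of_eventuallyEq hEv
    have huniq := hD.unique hZ
    linarith
  have ipt : ⟪pd1 Ψ (t, x), pd2 F (t, x)⟫ = -⟪ψ t x, pd1 (pd2 F) (t, x)⟫ := by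
    have hD : HasDerivAt (fun s => ⟪ψ s x, pd2 F (s, x)⟫)
        (⟪ψ t x, pd1 (pd2 F) (t, x)⟫ + ⟪pd1 Ψ (t, x), pd2 F (t, x)⟫) t :=
      hψT.inner ℝ haT
    have hEv : (fun s => ⟪ψ s x, pd2 F (s, x)⟫) =ᶠ[nhds t] fun _ => (0:ℝ) := by
      filter_upwards [Ioo_mem_nhds ht.1 ht.2] with s hs
      exact hn0 s ⟨le_of_lt hs.1, hs.2⟩ x hxx
    have hZ : HasDerivAt (fun s => ⟪ψ s x, pd2 F (s, x)⟫) 0 t :=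
      (hasDerivAt_const t (0:ℝ)).congr_of_eventuallyEq hEv
    have huniq := hD.unique hZ
    linarith
  -- the tangent as a function of x, and its derivative
  have hτX : HasDerivAt (fun y => ‖pd2 F (t, y)‖⁻¹ • pd2 F (t, y))
      (‖pd2 F (t, x)‖⁻¹ • pd2 (pd2 F) (t, x)
        + (-(⟪pd2 (pd2 F) (t, x), pd2 F (t, x)⟫ / ‖pd2 F (t, x)‖ ^ 3)) • pd2 F (t, x)) x :=
    (hasDerivAt_invnorm haX h0).smul haX
  -- Q4: curvature
  have hTfun : tang (f t) = fun y => ‖pd2 F (t, y)‖⁻¹ • pd2 F (t, y) := by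
    funext y; simp only [tang, aD, E1]
  have Q4 : curv (f t) x
      = ‖pd2 F (t, x)‖⁻¹ • (‖pd2 F (t, x)‖⁻¹ • pd2 (pd2 F) (t, x)
        + (-(⟪pd2 (pd2 F) (t, x), pd2 F (t, x)⟫ / ‖pd2 F (t, x)‖ ^ 3)) • pd2 F (t, x)) := by
    have h : curv (f t) x = ‖deriv (f t) x‖⁻¹ • deriv (tang (f t)) x := rfl
    rw [h, E1, hTfun, hτX.deriv]
  -- Q1
  have Q1 : nSF f ψ t x = ‖pd2 F (t, x)‖⁻¹ • pd2 Ψ (t, x)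
      - ⟪‖pd2 F (t, x)‖⁻¹ • pd2 Ψ (t, x), ‖pd2 F (t, x)‖⁻¹ • pd2 F (t, x)⟫
          • (‖pd2 F (t, x)‖⁻¹ • pd2 F (t, x)) := by
    simp only [nSF, nS, aD, tang, E1, E2]
  -- Q5
  have Q5 : normVel f t x = pd1 F (t, x)
      - ⟪pd1 F (t, x), ‖pd2 F (t, x)‖⁻¹ • pd2 F (t, x)⟫
          • (‖pd2 F (t, x)‖⁻¹ • pd2 F (t, x)) := by
    simp only [normVel, tanComp, tang, aD, E1, E3]
  -- Q6
  have hTC : tanComp f t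
      = fun y => ⟪pd1 F (t, y), ‖pd2 F (t, y)‖⁻¹ • pd2 F (t, y)⟫ := by
    funext y; simp only [tanComp, tang, aD, E1, E3]
  have hφX : HasDerivAt (fun y => ⟪pd1 F (t, y), ‖pd2 F (t, y)‖⁻¹ • pd2 F (t, y)⟫)
      (⟪pd1 F (t, x), ‖pd2 F (t, x)‖⁻¹ • pd2 (pd2 F) (t, x)
          + (-(⟪pd2 (pd2 F) (t, x), pd2 F (t, x)⟫ / ‖pd2 F (t, x)‖ ^ 3)) • pd2 F (t, x)⟫
        + ⟪pd1 (pd2 F) (t, x), ‖pd2 F (t, x)‖⁻¹ • pd2 F (t, x)⟫) x :=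
    hbX.inner ℝ hτX
  have Q6 : aDS (f t) (tanComp f t) x
      = ‖pd2 F (t, x)‖⁻¹ * (⟪pd1 F (t, x), ‖pd2 F (t, x)‖⁻¹ • pd2 (pd2 F) (t, x)
          + (-(⟪pd2 (pd2 F) (t, x), pd2 F (t, x)⟫ / ‖pd2 F (t, x)‖ ^ 3)) • pd2 F (t, x)⟫
        + ⟪pd1 (pd2 F) (t, x), ‖pd2 F (t, x)‖⁻¹ • pd2 F (t, x)⟫) := by
    simp only [aDS, E1]
    rw [hTC, hφX.deriv]
  -- Q7
  have hNV : normVel f t = fun y => pd1 F (t, y)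
      - ⟪pd1 F (t, y), ‖pd2 F (t, y)‖⁻¹ • pd2 F (t, y)⟫
          • (‖pd2 F (t, y)‖⁻¹ • pd2 F (t, y)) := by
    funext y; simp only [normVel, tanComp, tang, aD, E1, E3]
  have hdV : HasDerivAt (normVel f t)
      (projD ‖pd2 F (t, x)‖ (pd2 F (t, x)) (pd2 (pd2 F) (t, x)) (pd1 F (t, x))
        (pd1 (pd2 F) (t, x))) x := by
    rw [hNV]; exact hasDerivAt_proj haX hbX h0
  have Q7 : nS (f t) (normVel f t) x
      = ‖pd2 F (t, x)‖⁻¹ • projD ‖pd2 F (t, x)‖ (pd2 F (t, x)) (pd2 (pd2 F) (t, x))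
          (pd1 F (t, x)) (pd1 (pd2 F) (t, x))
        - ⟪‖pd2 F (t, x)‖⁻¹ • projD ‖pd2 F (t, x)‖ (pd2 F (t, x)) (pd2 (pd2 F) (t, x))
          (pd1 F (t, x)) (pd1 (pd2 F) (t, x)), ‖pd2 F (t, x)‖⁻¹ • pd2 F (t, x)⟫
          • (‖pd2 F (t, x)‖⁻¹ • pd2 F (t, x)) := by
    simp only [nS, aD, tang, E1]
    rw [hdV.deriv]
  -- Q3
  have hNT : nT f ψ t = fun y => pd1 Ψ (t, y)
      - ⟪pd1 Ψ (t, y), ‖pd2 F (t, y)‖⁻¹ • pd2 F (t, y)⟫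
          • (‖pd2 F (t, y)‖⁻¹ • pd2 F (t, y)) := by
    funext y; simp only [nT, tang, aD, E1, E4]
  have hdT : HasDerivAt (nT f ψ t)
      (projD ‖pd2 F (t, x)‖ (pd2 F (t, x)) (pd2 (pd2 F) (t, x)) (pd1 Ψ (t, x))
        (pd1 (pd2 Ψ) (t, x))) x := by
    rw [hNT]; exact hasDerivAt_proj haX hptX h0
  have Q3 : nSF f (nT f ψ) t x
      = ‖pd2 F (t, x)‖⁻¹ • projD ‖pd2 F (t, x)‖ (pd2 F (t, x)) (pd2 (pd2 F) (t, x))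
          (pd1 Ψ (t, x)) (pd1 (pd2 Ψ) (t, x))
        - ⟪‖pd2 F (t, x)‖⁻¹ • projD ‖pd2 F (t, x)‖ (pd2 F (t, x)) (pd2 (pd2 F) (t, x))
          (pd1 Ψ (t, x)) (pd1 (pd2 Ψ) (t, x)), ‖pd2 F (t, x)‖⁻¹ • pd2 F (t, x)⟫
          • (‖pd2 F (t, x)‖⁻¹ • pd2 F (t, x)) := by
    simp only [nSF, nS, aD, tang, E1]
    rw [hdT.deriv]
  -- Q2
  have hW : (fun s => nSF f ψ s x) = fun s => (‖pd2 F (s, x)‖⁻¹ • pd2 Ψ (s, x))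
      - ⟪‖pd2 F (s, x)‖⁻¹ • pd2 Ψ (s, x), ‖pd2 F (s, x)‖⁻¹ • pd2 F (s, x)⟫
          • (‖pd2 F (s, x)‖⁻¹ • pd2 F (s, x)) := by
    funext s; simp only [nSF, nS, aD, tang, E1, E2]
  have hG2 : HasDerivAt (fun s => ‖pd2 F (s, x)‖⁻¹ • pd2 Ψ (s, x))
      (‖pd2 F (t, x)‖⁻¹ • pd1 (pd2 Ψ) (t, x)
        + (-(⟪pd1 (pd2 F) (t, x), pd2 F (t, x)⟫ / ‖pd2 F (t, x)‖ ^ 3)) • pd2 Ψ (t, x)) t :=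
    (hasDerivAt_invnorm haT h0).smul hpxT
  have hdW : HasDerivAt (fun s => nSF f ψ s x)
      (projD ‖pd2 F (t, x)‖ (pd2 F (t, x)) (pd1 (pd2 F) (t, x))
        (‖pd2 F (t, x)‖⁻¹ • pd2 Ψ (t, x))
        (‖pd2 F (t, x)‖⁻¹ • pd1 (pd2 Ψ) (t, x)
          + (-(⟪pd1 (pd2 F) (t, x), pd2 F (t, x)⟫ / ‖pd2 F (t, x)‖ ^ 3)) • pd2 Ψ (t, x))) t := by
    rw [hW]; exact hasDerivAt_proj haT hG2 h0
  have Q2 : nT f (nSF f ψ) t x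
      = projD ‖pd2 F (t, x)‖ (pd2 F (t, x)) (pd1 (pd2 F) (t, x))
          (‖pd2 F (t, x)‖⁻¹ • pd2 Ψ (t, x))
          (‖pd2 F (t, x)‖⁻¹ • pd1 (pd2 Ψ) (t, x)
            + (-(⟪pd1 (pd2 F) (t, x), pd2 F (t, x)⟫ / ‖pd2 F (t, x)‖ ^ 3)) • pd2 Ψ (t, x))
        - ⟪projD ‖pd2 F (t, x)‖ (pd2 F (t, x)) (pd1 (pd2 F) (t, x))
          (‖pd2 F (t, x)‖⁻¹ • pd2 Ψ (t, x))
          (‖pd2 F (t, x)‖⁻¹ • pd1 (pd2 Ψ) (t, x)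
            + (-(⟪pd1 (pd2 F) (t, x), pd2 F (t, x)⟫ / ‖pd2 F (t, x)‖ ^ 3)) • pd2 Ψ (t, x)),
          ‖pd2 F (t, x)‖⁻¹ • pd2 F (t, x)⟫ • (‖pd2 F (t, x)‖⁻¹ • pd2 F (t, x)) := by
    simp only [nT, pT, tang, aD, E1]
    rw [hdW.deriv]
  rw [Q1, Q2, Q3, Q4, Q5, Q6, Q7]
  exact core ‖pd2 F (t, x)‖ hv (pd2 F (t, x)) (pd1 F (t, x)) (pd2 (pd2 F) (t, x))
    (pd1 (pd2 F) (t, x)) (ψ t x) (pd2 Ψ (t, x)) (pd1 Ψ (t, x)) (pd1 (pd2 Ψ) (t, x))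
    iaa iap ipx ipt


end
end

section
/- Let f : [0,T) × [0,1] → ℝⁿ be smooth with f(t,·) regular for each t and suppose ∂ₜf = V is purely normal (⟨∂ₜf, τ⟩ ≡ 0). Let ψ be a smooth normal vector field along f and set Y = ∇ₜψ + ∇ₛ⁴ψ. Then for all t ∈ (0,T): (d/dt)(½∫_I |ψ|² ds) + ∫_I |∇ₛ²ψ|² ds = −[⟨ψ, ∇ₛ³ψ⟩]₀¹ + [⟨∇ₛψ, ∇ₛ²ψ⟩]₀¹ + ∫_I ⟨Y, ψ⟩ ds − ½∫_I |ψ|²⟨κ, V⟩ ds, where [g]₀¹ = g(t,1) − g(t,0). In particular, if additionally ψ(t,0) = ψ(t,1) = 0 for all t, the term −[⟨ψ, ∇ₛ³ψ⟩]₀¹ vanishes. -/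
open scoped RealInnerProductSpace
open MeasureTheory

noncomputable section

variable {n : ℕ}

namespace MyAux



/-- partial derivative in the second variable -/
def D2 (F : ℝ × ℝ → En n) : ℝ × ℝ → En n := fun p => fderiv ℝ F p (0,1)
/-- partial derivative in the first variable -/
def D1 (F : ℝ × ℝ → En n) : ℝ × ℝ → En n := fun p => fderiv ℝ F p (1,0)

theorem hasDerivAt_sec2 {F : ℝ × ℝ → En n} (hF : ContDiff ℝ (⊤:ℕ∞) F) (t x : ℝ) :
    HasDerivAt (fun y => F (t, y)) (D2 F (t, x)) x := by
  have h1 : HasDerivAt (fun y => ((t, y) : ℝ × ℝ)) ((0,1) : ℝ × ℝ) x := by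
    simpa using HasDerivAt.prodMk (hasDerivAt_const x t) (hasDerivAt_id x)
  exact (hF.differentiable (by simp) (t, x)).hasFDerivAt.comp_hasDerivAt x h1

theorem hasDerivAt_sec1 {F : ℝ × ℝ → En n} (hF : ContDiff ℝ (⊤:ℕ∞) F) (t x : ℝ) :
    HasDerivAt (fun s => F (s, x)) (D1 F (t, x)) t := by
  have h1 : HasDerivAt (fun s => ((s, x) : ℝ × ℝ)) ((1,0) : ℝ × ℝ) t := by
    simpa using HasDerivAt.prodMk (hasDerivAt_id t) (hasDerivAt_const t x)
  exact (hF.differentiable (by simp) (t, x)).hasFDerivAt.comp_hasDerivAt t h1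

theorem contDiff_D2 {F : ℝ × ℝ → En n} (hF : ContDiff ℝ (⊤:ℕ∞) F) :
    ContDiff ℝ (⊤:ℕ∞) (D2 F) := by
  exact (ContinuousLinearMap.apply ℝ (En n) ((0:ℝ),(1:ℝ))).contDiff.comp
    (hF.fderiv_right (m := (⊤:ℕ∞)) (by exact_mod_cast le_top))

theorem contDiff_D1 {F : ℝ × ℝ → En n} (hF : ContDiff ℝ (⊤:ℕ∞) F) :
    ContDiff ℝ (⊤:ℕ∞) (D1 F) := by
  exact (ContinuousLinearMap.apply ℝ (En n) ((1:ℝ),(0:ℝ))).contDiff.comp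
    (hF.fderiv_right (m := (⊤:ℕ∞)) (by exact_mod_cast le_top))

theorem schwarz {F : ℝ × ℝ → En n} (hF : ContDiff ℝ (⊤:ℕ∞) F) (p : ℝ × ℝ) :
    D1 (D2 F) p = D2 (D1 F) p := by
  have hdF : Differentiable ℝ (fderiv ℝ F) :=
    (hF.fderiv_right (m := (⊤:ℕ∞)) (by exact_mod_cast le_top)).differentiable (by simp)
  have key : ∀ v : ℝ × ℝ,
      fderiv ℝ (fun q => fderiv ℝ F q v) p
        = (ContinuousLinearMap.apply ℝ (En n) v).comp (fderiv ℝ (fderiv ℝ F) p) := by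
    intro v
    exact (((ContinuousLinearMap.apply ℝ (En n) v).hasFDerivAt).comp p
      (hdF p).hasFDerivAt).fderiv
  have hsym := second_derivative_symmetric
    (f := F) (f' := fderiv ℝ F) (f'' := fderiv ℝ (fderiv ℝ F) p) (x := p)
    (fun y => (hF.differentiable (by simp) y).hasFDerivAt)
    (hdF p).hasFDerivAt ((1:ℝ),(0:ℝ)) ((0:ℝ),(1:ℝ))
  show fderiv ℝ (fun q => fderiv ℝ F q ((0:ℝ),(1:ℝ))) p ((1:ℝ),(0:ℝ))
      = fderiv ℝ (fun q => fderiv ℝ F q ((1:ℝ),(0:ℝ))) p ((0:ℝ),(1:ℝ))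
  rw [key, key]
  simpa using hsym






theorem top_le : (1 : WithTop ℕ∞) ≤ ((⊤:ℕ∞) : WithTop ℕ∞) := by exact_mod_cast le_top
theorem top_add_le : ((⊤:ℕ∞) : WithTop ℕ∞) + 1 ≤ ((⊤:ℕ∞) : WithTop ℕ∞) := by
  exact_mod_cast le_top

variable {c : ℝ → En n}

theorem isOpen_U (hc : ContDiff ℝ (⊤:ℕ∞) c) : IsOpen {x : ℝ | deriv c x ≠ 0} := by
  have : Continuous (deriv c) := hc.continuous_deriv top_le
  exact isOpen_ne.preimage this

theorem contDiffOn_deriv_of_isOpen {g : ℝ → En n} {U : Set ℝ} (hU : IsOpen U)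
    (hg : ContDiffOn ℝ (⊤:ℕ∞) g U) : ContDiffOn ℝ (⊤:ℕ∞) (deriv g) U :=
  hg.deriv_of_isOpen hU top_add_le

theorem contDiffOn_invnorm (hc : ContDiff ℝ (⊤:ℕ∞) c) :
    ContDiffOn ℝ (⊤:ℕ∞) (fun x => ‖deriv c x‖⁻¹) {x : ℝ | deriv c x ≠ 0} := by
  have h1 : ContDiffOn ℝ (⊤:ℕ∞) (deriv c) {x : ℝ | deriv c x ≠ 0} :=
    (contDiff_infty_iff_deriv.mp (by exact_mod_cast hc)).2.contDiffOn
  exact (h1.norm ℝ (fun x hx => hx)).inv (fun x hx => norm_ne_zero_iff.mpr hx)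

theorem contDiffOn_aD (hc : ContDiff ℝ (⊤:ℕ∞) c) {g : ℝ → En n}
    (hg : ContDiffOn ℝ (⊤:ℕ∞) g {x : ℝ | deriv c x ≠ 0}) :
    ContDiffOn ℝ (⊤:ℕ∞) (aD c g) {x : ℝ | deriv c x ≠ 0} :=
  (contDiffOn_invnorm hc).smul (contDiffOn_deriv_of_isOpen (isOpen_U hc) hg)

theorem contDiffOn_tang (hc : ContDiff ℝ (⊤:ℕ∞) c) :
    ContDiffOn ℝ (⊤:ℕ∞) (tang c) {x : ℝ | deriv c x ≠ 0} :=
  contDiffOn_aD hc (hc.contDiffOn)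

theorem contDiffOn_curv (hc : ContDiff ℝ (⊤:ℕ∞) c) :
    ContDiffOn ℝ (⊤:ℕ∞) (curv c) {x : ℝ | deriv c x ≠ 0} :=
  contDiffOn_aD hc (contDiffOn_tang hc)

theorem contDiffOn_nS (hc : ContDiff ℝ (⊤:ℕ∞) c) {g : ℝ → En n}
    (hg : ContDiffOn ℝ (⊤:ℕ∞) g {x : ℝ | deriv c x ≠ 0}) :
    ContDiffOn ℝ (⊤:ℕ∞) (nS c g) {x : ℝ | deriv c x ≠ 0} := by
  have haD := contDiffOn_aD hc hg
  have htang := contDiffOn_tang hc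
  exact haD.sub ((haD.inner ℝ htang).smul htang)

theorem contDiffOn_nSIter (hc : ContDiff ℝ (⊤:ℕ∞) c) {g : ℝ → En n}
    (hg : ContDiff ℝ (⊤:ℕ∞) g) (k : ℕ) :
    ContDiffOn ℝ (⊤:ℕ∞) (nSIter c k g) {x : ℝ | deriv c x ≠ 0} := by
  induction k with
  | zero => exact hg.contDiffOn
  | succ k ih => exact contDiffOn_nS hc ih

theorem norm_tang {x : ℝ} (hx : deriv c x ≠ 0) : ‖tang c x‖ = 1 := by
  simp [tang, aD, norm_smul, norm_ne_zero_iff.mpr hx,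
    inv_mul_cancel₀ (norm_ne_zero_iff.mpr hx)]

theorem inner_tang_self {x : ℝ} (hx : deriv c x ≠ 0) : ⟪tang c x, tang c x⟫ = 1 := by
  rw [real_inner_self_eq_norm_sq, norm_tang hx]; norm_num

theorem inner_nS_tang (g : ℝ → En n) {x : ℝ} (hx : deriv c x ≠ 0) :
    ⟪nS c g x, tang c x⟫ = 0 := by
  have h : nS c g x = aD c g x - ⟪aD c g x, tang c x⟫ • tang c x := rfl
  rw [h, inner_sub_left, real_inner_smul_left, inner_tang_self hx, mul_one, sub_self]

theorem deriv_eq_smul_aD {g : ℝ → En n} {x : ℝ} (hx : deriv c x ≠ 0) :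
    deriv g x = ‖deriv c x‖ • aD c g x := by
  rw [aD, smul_smul, mul_inv_cancel₀ (norm_ne_zero_iff.mpr hx), one_smul]

theorem aD_eq_nS_add {g : ℝ → En n} (x : ℝ) :
    aD c g x = nS c g x + ⟪aD c g x, tang c x⟫ • tang c x := by
  simp [nS]

/-- key pointwise product rule for inner products of fields orthogonal to the tangent -/
theorem hasDerivAt_inner_of_orth (hc : ContDiff ℝ (⊤:ℕ∞) c) {A B : ℝ → En n} {x : ℝ}
    (hx : deriv c x ≠ 0) (hA : DifferentiableAt ℝ A x) (hB : DifferentiableAt ℝ B x)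
    (hAt : ⟪A x, tang c x⟫ = 0) (hBt : ⟪B x, tang c x⟫ = 0) :
    HasDerivAt (fun y => ⟪A y, B y⟫)
      ((⟪nS c A x, B x⟫ + ⟪A x, nS c B x⟫) * ‖deriv c x‖) x := by
  have h := (hA.hasDerivAt.inner ℝ hB.hasDerivAt)
  have e1 : ⟪A x, deriv B x⟫ = ⟪A x, nS c B x⟫ * ‖deriv c x‖ := by
    rw [deriv_eq_smul_aD hx, real_inner_smul_right, aD_eq_nS_add (g := B) x,
      inner_add_right, real_inner_smul_right, hAt]
    ring
  have e2 : ⟪deriv A x, B x⟫ = ⟪nS c A x, B x⟫ * ‖deriv c x‖ := by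
    rw [deriv_eq_smul_aD hx, real_inner_smul_left, aD_eq_nS_add (g := A) x,
      inner_add_left, real_inner_smul_left,
      show ⟪tang c x, B x⟫ = 0 by rw [real_inner_comm]; exact hBt]
    ring
  exact h.congr_deriv (by rw [e1, e2]; ring)

theorem deriv_tang_eq {x : ℝ} (hx : deriv c x ≠ 0) :
    deriv (tang c) x = ‖deriv c x‖ • curv c x := by
  rw [curv, aD, smul_smul, mul_inv_cancel₀ (norm_ne_zero_iff.mpr hx), one_smul]




theorem ibp (hc : ContDiff ℝ (⊤:ℕ∞) c)
    (hreg : ∀ x ∈ Set.Icc (0:ℝ) 1, deriv c x ≠ 0) {A B : ℝ → En n}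
    (hA : ContDiffOn ℝ (⊤:ℕ∞) A {x : ℝ | deriv c x ≠ 0})
    (hB : ContDiffOn ℝ (⊤:ℕ∞) B {x : ℝ | deriv c x ≠ 0})
    (hAt : ∀ x ∈ Set.Icc (0:ℝ) 1, ⟪A x, tang c x⟫ = 0)
    (hBt : ∀ x ∈ Set.Icc (0:ℝ) 1, ⟪B x, tang c x⟫ = 0) :
    ∫ x in (0:ℝ)..1, (⟪nS c A x, B x⟫ + ⟪A x, nS c B x⟫) * ‖deriv c x‖
      = ⟪A 1, B 1⟫ - ⟪A 0, B 0⟫ := by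
  have hUo : IsOpen {x : ℝ | deriv c x ≠ 0} := isOpen_U hc
  have hsub : Set.Icc (0:ℝ) 1 ⊆ {x : ℝ | deriv c x ≠ 0} := fun x hx => hreg x hx
  have huIcc : Set.uIcc (0:ℝ) 1 = Set.Icc (0:ℝ) 1 := Set.uIcc_of_le (by norm_num)
  have hderiv : ∀ x ∈ Set.uIcc (0:ℝ) 1,
      HasDerivAt (fun y => ⟪A y, B y⟫)
        ((⟪nS c A x, B x⟫ + ⟪A x, nS c B x⟫) * ‖deriv c x‖) x := by
    intro x hx
    rw [huIcc] at hx
    exact hasDerivAt_inner_of_orth hc (hreg x hx)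
      ((hA.contDiffAt (hUo.mem_nhds (hsub hx))).differentiableAt (by simp))
      ((hB.contDiffAt (hUo.mem_nhds (hsub hx))).differentiableAt (by simp))
      (hAt x hx) (hBt x hx)
  have hcont : ContinuousOn
      (fun x => (⟪nS c A x, B x⟫ + ⟪A x, nS c B x⟫) * ‖deriv c x‖)
      (Set.uIcc (0:ℝ) 1) := by
    rw [huIcc]
    have h1 := (contDiffOn_nS hc hA).continuousOn
    have h2 := (contDiffOn_nS hc hB).continuousOn
    have h3 := hA.continuousOn
    have h4 := hB.continuousOn
    have h5 : ContinuousOn (deriv c) {x : ℝ | deriv c x ≠ 0} :=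
      (hc.continuous_deriv top_le).continuousOn
    exact (((h1.inner h4).add (h3.inner h2)).mul h5.norm).mono hsub
  exact intervalIntegral.integral_eq_sub_of_hasDerivAt hderiv
    hcont.intervalIntegrable




theorem hasDerivAt_norm {v : ℝ → En n} {v' : En n} {x : ℝ}
    (hv : HasDerivAt v v' x) (h0 : v x ≠ 0) :
    HasDerivAt (fun y => ‖v y‖) (⟪v x, v'⟫ / ‖v x‖) x := by
  have hinner : HasDerivAt (fun y => ⟪v y, v y⟫) (⟪v x, v'⟫ + ⟪v', v x⟫) x :=
    hv.inner ℝ hv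
  have hne : ⟪v x, v x⟫ ≠ (0:ℝ) := by
    rw [real_inner_self_eq_norm_sq]
    exact pow_ne_zero 2 (norm_ne_zero_iff.mpr h0)
  have hs := (Real.hasDerivAt_sqrt hne).comp x hinner
  have heq : (fun y => Real.sqrt ⟪v y, v y⟫) = fun y => ‖v y‖ := by
    funext y
    rw [real_inner_self_eq_norm_mul_norm, Real.sqrt_mul_self (norm_nonneg _)]
  refine heq ▸ (hs.congr_deriv ?_)
  rw [real_inner_self_eq_norm_mul_norm, Real.sqrt_mul_self (norm_nonneg _),
    real_inner_comm (v' ) (v x)]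
  field_simp
  ring



/-- the pointwise time derivative of the integrand -/
def Hd (f ψ : ℝ → ℝ → En n) : ℝ → ℝ → ℝ := fun s x =>
  (⟪Function.uncurry ψ (s,x), D1 (Function.uncurry ψ) (s,x)⟫
    + ⟪D1 (Function.uncurry ψ) (s,x), Function.uncurry ψ (s,x)⟫)
      * ‖D2 (Function.uncurry f) (s,x)‖
  + ⟪Function.uncurry ψ (s,x), Function.uncurry ψ (s,x)⟫
      * (⟪D2 (Function.uncurry f) (s,x), D1 (D2 (Function.uncurry f)) (s,x)⟫
          / ‖D2 (Function.uncurry f) (s,x)‖)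

theorem deriv_curve_eq (f : ℝ → ℝ → En n) (hf : ContDiff ℝ (⊤:ℕ∞) (Function.uncurry f))
    (s x : ℝ) : deriv (f s) x = D2 (Function.uncurry f) (s, x) := by
  have := hasDerivAt_sec2 hf s x
  exact HasDerivAt.deriv (by exact this)

theorem pT_eq (f : ℝ → ℝ → En n) (hf : ContDiff ℝ (⊤:ℕ∞) (Function.uncurry f))
    (s x : ℝ) : deriv (fun u => f u x) s = D1 (Function.uncurry f) (s, x) := by
  have := hasDerivAt_sec1 hf s x
  exact HasDerivAt.deriv (by exact this)

theorem hasDerivAt_integrand {f ψ : ℝ → ℝ → En n}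
    (hf : ContDiff ℝ (⊤:ℕ∞) (Function.uncurry f))
    (hψ : ContDiff ℝ (⊤:ℕ∞) (Function.uncurry ψ)) {s x : ℝ}
    (h0 : D2 (Function.uncurry f) (s, x) ≠ 0) :
    HasDerivAt (fun u => ‖ψ u x‖ ^ 2 * ‖deriv (f u) x‖) (Hd f ψ s x) s := by
  have hΨ : HasDerivAt (fun u => Function.uncurry ψ (u, x))
      (D1 (Function.uncurry ψ) (s, x)) s := hasDerivAt_sec1 hψ s x
  have hD2 : HasDerivAt (fun u => D2 (Function.uncurry f) (u, x))
      (D1 (D2 (Function.uncurry f)) (s, x)) s := hasDerivAt_sec1 (contDiff_D2 hf) s x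
  have hn : HasDerivAt (fun u => ‖D2 (Function.uncurry f) (u, x)‖)
      (⟪D2 (Function.uncurry f) (s,x), D1 (D2 (Function.uncurry f)) (s,x)⟫
        / ‖D2 (Function.uncurry f) (s,x)‖) s := hasDerivAt_norm hD2 h0
  have hin : HasDerivAt (fun u => ⟪Function.uncurry ψ (u,x), Function.uncurry ψ (u,x)⟫)
      (⟪Function.uncurry ψ (s,x), D1 (Function.uncurry ψ) (s,x)⟫
        + ⟪D1 (Function.uncurry ψ) (s,x), Function.uncurry ψ (s,x)⟫) s := hΨ.inner ℝ hΨ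
  have hmul := hin.mul hn
  have heq : (fun u => ‖ψ u x‖ ^ 2 * ‖deriv (f u) x‖)
      = fun u => ⟪Function.uncurry ψ (u,x), Function.uncurry ψ (u,x)⟫
          * ‖D2 (Function.uncurry f) (u, x)‖ := by
    funext u
    rw [real_inner_self_eq_norm_sq, deriv_curve_eq f hf u x]
    rfl
  rw [heq]
  exact hmul

theorem hasDerivAt_energy {T : ℝ} {f ψ : ℝ → ℝ → En n}
    (hf : ContDiff ℝ (⊤:ℕ∞) (Function.uncurry f))
    (hψ : ContDiff ℝ (⊤:ℕ∞) (Function.uncurry ψ))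
    (hreg : ∀ t ∈ Set.Ico (0:ℝ) T, ∀ x ∈ Set.Icc (0:ℝ) 1, deriv (f t) x ≠ 0)
    {t : ℝ} (ht : t ∈ Set.Ioo 0 T) :
    HasDerivAt (fun s => ∫ x in (0:ℝ)..1, ‖ψ s x‖ ^ 2 * ‖deriv (f s) x‖)
      (∫ x in (0:ℝ)..1, Hd f ψ t x) t := by
  set F := Function.uncurry f with hF
  set ε : ℝ := min t (T - t) / 2 with hε
  have hεpos : 0 < ε := by
    have h1 : 0 < t := ht.1
    have h2 : 0 < T - t := by linarith [ht.2]
    positivity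
  have hεt : ε < t := by
    have h1 := min_le_left t (T - t)
    have h2 : ε ≤ t / 2 := by rw [hε]; linarith
    linarith [ht.1]
  have hεT : ε < T - t := by
    have h1 := min_le_right t (T - t)
    have h2 : ε ≤ (T - t) / 2 := by rw [hε]; linarith
    have h3 : 0 < T - t := by linarith [ht.2]
    linarith
  have hball : Metric.closedBall t ε ⊆ Set.Ioo 0 T := by
    intro s hs
    rw [Metric.mem_closedBall, Real.dist_eq, abs_le] at hs
    exact ⟨by linarith [hs.1], by linarith [hs.2]⟩
  have hKne : ∀ p ∈ Metric.closedBall t ε ×ˢ Set.Icc (0:ℝ) 1, D2 F p ≠ 0 := by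
    rintro ⟨s, x⟩ ⟨hs, hx⟩
    have hs' : s ∈ Set.Ico (0:ℝ) T := ⟨(hball hs).1.le, (hball hs).2⟩
    have := hreg s hs' x hx
    rwa [deriv_curve_eq f hf s x] at this
  -- continuity of Hd on the compact set
  have hcΨ : Continuous (Function.uncurry ψ) := hψ.continuous
  have hcD1Ψ : Continuous (D1 (Function.uncurry ψ)) := (contDiff_D1 hψ).continuous
  have hcD2F : Continuous (D2 F) := (contDiff_D2 hf).continuous
  have hcD1D2F : Continuous (D1 (D2 F)) := (contDiff_D1 (contDiff_D2 hf)).continuous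
  have hcont : ContinuousOn (fun p : ℝ × ℝ => Hd f ψ p.1 p.2)
      (Metric.closedBall t ε ×ˢ Set.Icc (0:ℝ) 1) := by
    have h1 : ContinuousOn (fun p : ℝ × ℝ =>
        (⟪Function.uncurry ψ p, D1 (Function.uncurry ψ) p⟫
          + ⟪D1 (Function.uncurry ψ) p, Function.uncurry ψ p⟫) * ‖D2 F p‖)
        (Metric.closedBall t ε ×ˢ Set.Icc (0:ℝ) 1) :=
      (((hcΨ.inner hcD1Ψ).add (hcD1Ψ.inner hcΨ)).mul hcD2F.norm).continuousOn
    have h2 : ContinuousOn (fun p : ℝ × ℝ =>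
        ⟪Function.uncurry ψ p, Function.uncurry ψ p⟫
          * (⟪D2 F p, D1 (D2 F) p⟫ / ‖D2 F p‖))
        (Metric.closedBall t ε ×ˢ Set.Icc (0:ℝ) 1) := by
      refine (hcΨ.inner hcΨ).continuousOn.mul ?_
      exact (hcD2F.inner hcD1D2F).continuousOn.div hcD2F.norm.continuousOn
        (fun p hp => norm_ne_zero_iff.mpr (hKne p hp))
    exact h1.add h2
  obtain ⟨C, hC⟩ := ((isCompact_closedBall t ε).prod isCompact_Icc).exists_bound_of_continuousOn
    hcont
  -- apply parametric differentiation
  have key := intervalIntegral.hasDerivAt_integral_of_dominated_loc_of_deriv_le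
    (F := fun s x => ‖ψ s x‖ ^ 2 * ‖deriv (f s) x‖) (F' := Hd f ψ) (x₀ := t)
    (a := (0:ℝ)) (b := 1) (μ := volume) (bound := fun _ => C) (Metric.ball_mem_nhds t hεpos)
    ?_ ?_ ?_ ?_ ?_ ?_
  · exact key.2
  · -- measurability of F s
    refine Filter.Eventually.of_forall (fun s => ?_)
    have hfs : Continuous (fun x => ‖ψ s x‖ ^ 2 * ‖deriv (f s) x‖) := by
      have e1 : (fun x => ‖ψ s x‖ ^ 2 * ‖deriv (f s) x‖)
          = fun x => ‖Function.uncurry ψ (s, x)‖ ^ 2 * ‖D2 F (s, x)‖ := by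
        funext x; rw [deriv_curve_eq f hf s x]; rfl
      rw [e1]
      fun_prop
    exact hfs.aestronglyMeasurable
  · -- interval integrability at t
    have hfs : Continuous (fun x => ‖ψ t x‖ ^ 2 * ‖deriv (f t) x‖) := by
      have e1 : (fun x => ‖ψ t x‖ ^ 2 * ‖deriv (f t) x‖)
          = fun x => ‖Function.uncurry ψ (t, x)‖ ^ 2 * ‖D2 F (t, x)‖ := by
        funext x; rw [deriv_curve_eq f hf t x]; rfl
      rw [e1]
      fun_prop
    exact hfs.intervalIntegrable 0 1
  · -- measurability of Hd t
    have : ContinuousOn (Hd f ψ t) (Set.Icc (0:ℝ) 1) := by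
      have : Set.Icc (0:ℝ) 1 ⊆ {x | ((t:ℝ), x) ∈ Metric.closedBall t ε ×ˢ Set.Icc (0:ℝ) 1} := by
        intro x hx
        exact ⟨Metric.mem_closedBall_self hεpos.le, hx⟩
      exact fun x hx => ((hcont.comp (Continuous.continuousOn (by fun_prop))
        (fun y hy => this hy)) x hx)
    have hsub2 : Set.uIoc (0:ℝ) 1 ⊆ Set.Icc (0:ℝ) 1 := by
      rw [Set.uIoc_of_le (by norm_num : (0:ℝ) ≤ 1)]
      exact Set.Ioc_subset_Icc_self
    exact (this.mono hsub2).aestronglyMeasurable measurableSet_uIoc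
  · -- bound
    refine Filter.Eventually.of_forall (fun x hx s hs => ?_)
    have hx' : x ∈ Set.Icc (0:ℝ) 1 := by
      rw [Set.uIoc_of_le (by norm_num : (0:ℝ) ≤ 1)] at hx
      exact Set.Ioc_subset_Icc_self hx
    exact hC (s, x) ⟨Metric.ball_subset_closedBall hs, hx'⟩
  · exact intervalIntegrable_const
  · -- differentiability
    refine Filter.Eventually.of_forall (fun x hx s hs => ?_)
    have hx' : x ∈ Set.Icc (0:ℝ) 1 := by
      rw [Set.uIoc_of_le (by norm_num : (0:ℝ) ≤ 1)] at hx
      exact Set.Ioc_subset_Icc_self hx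
    exact hasDerivAt_integrand hf hψ
      (hKne (s, x) ⟨Metric.ball_subset_closedBall hs, hx'⟩)


theorem intervalIntegrable_mul_norm {c : ℝ → En n} (hc : ContDiff ℝ (⊤:ℕ∞) c)
    (hreg' : ∀ x ∈ Set.Icc (0:ℝ) 1, deriv c x ≠ 0) {u : ℝ → ℝ}
    (hu : ContinuousOn u {x : ℝ | deriv c x ≠ 0}) :
    IntervalIntegrable (fun x => u x * ‖deriv c x‖) MeasureTheory.volume 0 1 := by
  have hsub : Set.uIcc (0:ℝ) 1 ⊆ {x : ℝ | deriv c x ≠ 0} := by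
    rw [Set.uIcc_of_le (by norm_num : (0:ℝ) ≤ 1)]
    exact fun x hx => hreg' x hx
  exact ((hu.mul ((hc.continuous_deriv top_le).norm.continuousOn)).mono hsub).intervalIntegrable

end MyAux

/-- The basic integral identity: for a purely normal flow `∂ₜf = V` and a normal field `ψ`,
`d/dt (½∫|ψ|² ds) + ∫|∇ₛ²ψ|² ds = -[⟨ψ,∇ₛ³ψ⟩]₀¹ + [⟨∇ₛψ,∇ₛ²ψ⟩]₀¹ + ∫⟨Y,ψ⟩ ds - ½∫|ψ|²⟨κ,V⟩ ds`
with `Y = ∇ₜψ + ∇ₛ⁴ψ`; moreover the first boundary term vanishes whenever `ψ = 0` on `∂I`. -/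
theorem integral_identity_normal_field (n : ℕ) (hn : 2 ≤ n)
    (T : ℝ) (hT : 0 < T)
    (f : ℝ → ℝ → En n)
    (hsmooth : ContDiff ℝ (⊤ : ℕ∞) (Function.uncurry f))
    (hreg : ∀ t ∈ Set.Ico (0:ℝ) T, ∀ x ∈ Set.Icc (0:ℝ) 1, deriv (f t) x ≠ 0)
    (hnormalflow : ∀ t ∈ Set.Ico (0:ℝ) T, ∀ x ∈ Set.Icc (0:ℝ) 1,
      ⟪pT f t x, tang (f t) x⟫ = 0)
    (ψ : ℝ → ℝ → En n)
    (hψsmooth : ContDiff ℝ (⊤ : ℕ∞) (Function.uncurry ψ))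
    (hψnormal : ∀ t ∈ Set.Ico (0:ℝ) T, ∀ x ∈ Set.Icc (0:ℝ) 1,
      ⟪ψ t x, tang (f t) x⟫ = 0) :
    (∀ t ∈ Set.Ioo (0:ℝ) T,
      HasDerivAt (fun s => (1/2) * ∫ x in (0:ℝ)..1, ‖ψ s x‖ ^ 2 * ‖deriv (f s) x‖)
        (-(∫ x in (0:ℝ)..1, ‖nSF f (nSF f ψ) t x‖ ^ 2 * ‖deriv (f t) x‖)
          - (⟪ψ t 1, nSIter (f t) 3 (ψ t) 1⟫ - ⟪ψ t 0, nSIter (f t) 3 (ψ t) 0⟫)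
          + (⟪nS (f t) (ψ t) 1, nSIter (f t) 2 (ψ t) 1⟫
            - ⟪nS (f t) (ψ t) 0, nSIter (f t) 2 (ψ t) 0⟫)
          + (∫ x in (0:ℝ)..1,
              ⟪nT f ψ t x + nSIter (f t) 4 (ψ t) x, ψ t x⟫ * ‖deriv (f t) x‖)
          - (1/2) * ∫ x in (0:ℝ)..1,
              ‖ψ t x‖ ^ 2 * ⟪curv (f t) x, pT f t x⟫ * ‖deriv (f t) x‖) t) ∧
    ((∀ t ∈ Set.Ico (0:ℝ) T, ψ t 0 = 0 ∧ ψ t 1 = 0) →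
      ∀ t ∈ Set.Ico (0:ℝ) T,
        ⟪ψ t 1, nSIter (f t) 3 (ψ t) 1⟫ - ⟪ψ t 0, nSIter (f t) 3 (ψ t) 0⟫ = 0) := by
  constructor
  · -- main identity
    intro t ht
    have htI : t ∈ Set.Ico (0:ℝ) T := ⟨ht.1.le, ht.2⟩
    have hreg' : ∀ x ∈ Set.Icc (0:ℝ) 1, deriv (f t) x ≠ 0 := hreg t htI
    have hc : ContDiff ℝ (⊤:ℕ∞) (f t) := by
      have : ContDiff ℝ (⊤:ℕ∞) (fun x : ℝ => Function.uncurry f (t, x)) :=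
        hsmooth.comp (contDiff_const.prodMk contDiff_id)
      exact this
    have hψt : ContDiff ℝ (⊤:ℕ∞) (ψ t) := by
      have : ContDiff ℝ (⊤:ℕ∞) (fun x : ℝ => Function.uncurry ψ (t, x)) :=
        hψsmooth.comp (contDiff_const.prodMk contDiff_id)
      exact this
    have hUo : IsOpen {x : ℝ | deriv (f t) x ≠ 0} := MyAux.isOpen_U hc
    have hsub : Set.Icc (0:ℝ) 1 ⊆ {x : ℝ | deriv (f t) x ≠ 0} := fun x hx => hreg' x hx
    -- continuity facts
    have hW : pT f t = fun y => MyAux.D1 (Function.uncurry f) (t, y) :=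
      funext fun y => MyAux.pT_eq f hsmooth t y
    have hPψ : pT ψ t = fun y => MyAux.D1 (Function.uncurry ψ) (t, y) :=
      funext fun y => MyAux.pT_eq ψ hψsmooth t y
    have hcW : Continuous (pT f t) := by
      rw [hW]; exact (MyAux.contDiff_D1 hsmooth).continuous.comp (by fun_prop)
    have hcPψ : Continuous (pT ψ t) := by
      rw [hPψ]; exact (MyAux.contDiff_D1 hψsmooth).continuous.comp (by fun_prop)
    have hcn : ∀ k, ContinuousOn (nSIter (f t) k (ψ t)) {x : ℝ | deriv (f t) x ≠ 0} :=
      fun k => (MyAux.contDiffOn_nSIter hc hψt k).continuousOn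
    have hcτ : ContinuousOn (tang (f t)) {x : ℝ | deriv (f t) x ≠ 0} :=
      (MyAux.contDiffOn_tang hc).continuousOn
    have hcκ : ContinuousOn (curv (f t)) {x : ℝ | deriv (f t) x ≠ 0} :=
      (MyAux.contDiffOn_curv hc).continuousOn
    have hcnT : ContinuousOn (nT f ψ t) {x : ℝ | deriv (f t) x ≠ 0} := by
      have : nT f ψ t = fun x => pT ψ t x - ⟪pT ψ t x, tang (f t) x⟫ • tang (f t) x := rfl
      rw [this]
      exact hcPψ.continuousOn.sub ((hcPψ.continuousOn.inner hcτ).fun_smul hcτ)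
    -- atomic integrands
    set g1 : ℝ → ℝ := fun x => ⟪nSIter (f t) 4 (ψ t) x, ψ t x⟫ * ‖deriv (f t) x‖ with hg1
    set g2 : ℝ → ℝ := fun x => ⟪nSIter (f t) 3 (ψ t) x, nS (f t) (ψ t) x⟫ * ‖deriv (f t) x‖
      with hg2
    set g3 : ℝ → ℝ := fun x => ⟪nSIter (f t) 2 (ψ t) x, nSIter (f t) 2 (ψ t) x⟫
      * ‖deriv (f t) x‖ with hg3
    set g4 : ℝ → ℝ := fun x => ⟪nT f ψ t x, ψ t x⟫ * ‖deriv (f t) x‖ with hg4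
    set g5 : ℝ → ℝ := fun x => (‖ψ t x‖ ^ 2 * ⟪curv (f t) x, pT f t x⟫) * ‖deriv (f t) x‖
      with hg5
    have hi1 : IntervalIntegrable g1 MeasureTheory.volume 0 1 :=
      MyAux.intervalIntegrable_mul_norm hc hreg' ((hcn 4).inner (hψt.continuous.continuousOn))
    have hi2 : IntervalIntegrable g2 MeasureTheory.volume 0 1 :=
      MyAux.intervalIntegrable_mul_norm hc hreg' ((hcn 3).inner (hcn 1))
    have hi3 : IntervalIntegrable g3 MeasureTheory.volume 0 1 :=
      MyAux.intervalIntegrable_mul_norm hc hreg' ((hcn 2).inner (hcn 2))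
    have hi4 : IntervalIntegrable g4 MeasureTheory.volume 0 1 :=
      MyAux.intervalIntegrable_mul_norm hc hreg' (hcnT.inner (hψt.continuous.continuousOn))
    have hi5 : IntervalIntegrable g5 MeasureTheory.volume 0 1 :=
      MyAux.intervalIntegrable_mul_norm hc hreg'
        (((hψt.continuous.norm.pow 2).continuousOn).mul (hcκ.inner hcW.continuousOn))
    -- integration by parts 1
    have hψnorm' : ∀ x ∈ Set.Icc (0:ℝ) 1, ⟪ψ t x, tang (f t) x⟫ = 0 := hψnormal t htI
    have ibp1 : (∫ x in (0:ℝ)..1, g1 x) + (∫ x in (0:ℝ)..1, g2 x)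
        = ⟪nSIter (f t) 3 (ψ t) 1, ψ t 1⟫ - ⟪nSIter (f t) 3 (ψ t) 0, ψ t 0⟫ := by
      have h := MyAux.ibp hc hreg' (MyAux.contDiffOn_nSIter hc hψt 3) hψt.contDiffOn
        (fun x hx => MyAux.inner_nS_tang _ (hreg' x hx)) hψnorm'
      rw [← intervalIntegral.integral_add hi1 hi2]
      rw [← h]
      congr 1
      funext x
      simp only [hg1, hg2]
      rw [show nS (f t) (nSIter (f t) 3 (ψ t)) x = nSIter (f t) 4 (ψ t) x from rfl]
      ring
    -- integration by parts 2
    have ibp2 : (∫ x in (0:ℝ)..1, g2 x) + (∫ x in (0:ℝ)..1, g3 x)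
        = ⟪nSIter (f t) 2 (ψ t) 1, nS (f t) (ψ t) 1⟫
          - ⟪nSIter (f t) 2 (ψ t) 0, nS (f t) (ψ t) 0⟫ := by
      have h := MyAux.ibp hc hreg' (MyAux.contDiffOn_nSIter hc hψt 2)
        (MyAux.contDiffOn_nSIter hc hψt 1)
        (fun x hx => MyAux.inner_nS_tang _ (hreg' x hx))
        (fun x hx => MyAux.inner_nS_tang _ (hreg' x hx))
      rw [show nSIter (f t) 1 (ψ t) = nS (f t) (ψ t) from rfl] at h
      rw [← intervalIntegral.integral_add hi2 hi3]
      rw [← h]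
      congr 1
      funext x
      simp only [hg2, hg3]
      rw [show nS (f t) (nSIter (f t) 2 (ψ t)) x = nSIter (f t) 3 (ψ t) x from rfl,
        show nS (f t) (nS (f t) (ψ t)) x = nSIter (f t) 2 (ψ t) x from rfl]
      ring
    -- pointwise identity for Hd
    have hHd : ∀ x ∈ Set.Ioo (0:ℝ) 1, MyAux.Hd f ψ t x = 2 * g4 x - g5 x := by
      intro x hx
      have hxI : x ∈ Set.Icc (0:ℝ) 1 := Set.Ioo_subset_Icc_self hx
      have hx' : deriv (f t) x ≠ 0 := hreg' x hxI
      have hnx : ‖deriv (f t) x‖ ≠ 0 := norm_ne_zero_iff.mpr hx'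
      have e_d2 : MyAux.D2 (Function.uncurry f) (t, x) = deriv (f t) x :=
        (MyAux.deriv_curve_eq f hsmooth t x).symm
      have e_d1ψ : MyAux.D1 (Function.uncurry ψ) (t, x) = pT ψ t x :=
        (MyAux.pT_eq ψ hψsmooth t x).symm
      -- Key1 : ⟪ψ, pTψ⟫ = ⟪nT ψ, ψ⟫
      have key1 : ⟪pT ψ t x, ψ t x⟫ = ⟪nT f ψ t x, ψ t x⟫ := by
        have hnT : nT f ψ t x
            = pT ψ t x - ⟪pT ψ t x, tang (f t) x⟫ • tang (f t) x := rfl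
        rw [hnT, inner_sub_left, real_inner_smul_left,
          show ⟪tang (f t) x, ψ t x⟫ = 0 by
            rw [real_inner_comm]; exact hψnorm' x hxI]
        ring
      -- Key2
      have e_dd : MyAux.D1 (MyAux.D2 (Function.uncurry f)) (t, x) = deriv (pT f t) x := by
        rw [MyAux.schwarz hsmooth, hW]
        exact (HasDerivAt.deriv (MyAux.hasDerivAt_sec2 (MyAux.contDiff_D1 hsmooth) t x)).symm
      have hτd : DifferentiableAt ℝ (tang (f t)) x :=
        ((MyAux.contDiffOn_tang hc).contDiffAt (hUo.mem_nhds hx')).differentiableAt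
          (by simp)
      have hWd : DifferentiableAt ℝ (pT f t) x := by
        rw [hW]
        have h1 : DifferentiableAt ℝ (fun y : ℝ => ((t, y) : ℝ × ℝ)) x := by fun_prop
        exact DifferentiableAt.comp x
          (((MyAux.contDiff_D1 hsmooth).differentiable (by simp)) (t, x)) h1
      have hder : HasDerivAt (fun y => ⟪pT f t y, tang (f t) y⟫)
          (⟪pT f t x, deriv (tang (f t)) x⟫ + ⟪deriv (pT f t) x, tang (f t) x⟫) x :=
        hWd.hasDerivAt.inner ℝ hτd.hasDerivAt
      have hzero : (fun y => ⟪pT f t y, tang (f t) y⟫) =ᶠ[nhds x] (fun _ => (0:ℝ)) := by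
        filter_upwards [Ioo_mem_nhds hx.1 hx.2] with y hy
        exact hnormalflow t htI y (Set.Ioo_subset_Icc_self hy)
      have hconst : HasDerivAt (fun y => ⟪pT f t y, tang (f t) y⟫) 0 x :=
        (hasDerivAt_const x (0:ℝ)).congr_of_eventuallyEq hzero
      have hsum : ⟪pT f t x, deriv (tang (f t)) x⟫ + ⟪deriv (pT f t) x, tang (f t) x⟫ = 0 :=
        hder.unique hconst
      have key2 : ⟪MyAux.D2 (Function.uncurry f) (t, x),
          MyAux.D1 (MyAux.D2 (Function.uncurry f)) (t, x)⟫
          = -(⟪curv (f t) x, pT f t x⟫ * ‖deriv (f t) x‖ ^ 2) := by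
        have e_c : deriv (f t) x = ‖deriv (f t) x‖ • tang (f t) x :=
          MyAux.deriv_eq_smul_aD hx'
        have e_t : ⟪tang (f t) x, deriv (pT f t) x⟫
            = -⟪pT f t x, deriv (tang (f t)) x⟫ := by
          rw [real_inner_comm]
          linarith [hsum]
        have e_k : ⟪pT f t x, deriv (tang (f t)) x⟫
            = ‖deriv (f t) x‖ * ⟪pT f t x, curv (f t) x⟫ := by
          rw [MyAux.deriv_tang_eq hx', real_inner_smul_right]
        have e_k2 : ⟪pT f t x, curv (f t) x⟫ = ⟪curv (f t) x, pT f t x⟫ :=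
          real_inner_comm _ _
        rw [e_d2, e_dd]
        conv_lhs => rw [e_c]
        rw [real_inner_smul_left, e_t, e_k, e_k2]
        ring
      -- put together
      have hHdx : MyAux.Hd f ψ t x
          = (⟪ψ t x, pT ψ t x⟫ + ⟪pT ψ t x, ψ t x⟫) * ‖deriv (f t) x‖
            + ⟪ψ t x, ψ t x⟫
              * (-(⟪curv (f t) x, pT f t x⟫ * ‖deriv (f t) x‖ ^ 2) / ‖deriv (f t) x‖) := by
        show (⟪Function.uncurry ψ (t,x), MyAux.D1 (Function.uncurry ψ) (t,x)⟫
            + ⟪MyAux.D1 (Function.uncurry ψ) (t,x), Function.uncurry ψ (t,x)⟫)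
              * ‖MyAux.D2 (Function.uncurry f) (t,x)‖
          + ⟪Function.uncurry ψ (t,x), Function.uncurry ψ (t,x)⟫
              * (⟪MyAux.D2 (Function.uncurry f) (t,x),
                  MyAux.D1 (MyAux.D2 (Function.uncurry f)) (t,x)⟫
                / ‖MyAux.D2 (Function.uncurry f) (t,x)‖) = _
        rw [key2, e_d1ψ, e_d2]
        rfl
      rw [hHdx, key1]
      simp only [hg4, hg5]
      rw [real_inner_self_eq_norm_sq,
        show ⟪ψ t x, pT ψ t x⟫ = ⟪pT ψ t x, ψ t x⟫ from real_inner_comm _ _, key1]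
      field_simp
      ring
    -- the derivative of the energy
    have hEn := MyAux.hasDerivAt_energy hsmooth hψsmooth hreg ht
    have hHdint : (∫ x in (0:ℝ)..1, MyAux.Hd f ψ t x)
        = 2 * (∫ x in (0:ℝ)..1, g4 x) - (∫ x in (0:ℝ)..1, g5 x) := by
      have hcongr : (∫ x in (0:ℝ)..1, MyAux.Hd f ψ t x)
          = ∫ x in (0:ℝ)..1, (2 * g4 x - g5 x) := by
        apply intervalIntegral.integral_congr_ae
        have hne : ∀ᵐ x : ℝ, x ≠ 1 := by
          have : MeasureTheory.volume ({(1:ℝ)} : Set ℝ) = 0 := measure_singleton 1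
          exact (MeasureTheory.measure_eq_zero_iff_ae_notMem.mp this).mono (by simp)
        filter_upwards [hne] with x hx1 hx
        rw [Set.uIoc_of_le (by norm_num : (0:ℝ) ≤ 1)] at hx
        exact hHd x ⟨hx.1, lt_of_le_of_ne hx.2 hx1⟩
      rw [hcongr, intervalIntegral.integral_sub ((hi4.const_mul 2)) hi5,
        intervalIntegral.integral_const_mul]
    -- final assembly
    have hfinal := (hEn.const_mul (1/2 : ℝ))
    refine hfinal.congr_deriv ?_
    rw [hHdint]
    -- rewrite the claimed value in terms of g-integrals
    have eq_a : (∫ x in (0:ℝ)..1, ‖nSF f (nSF f ψ) t x‖ ^ 2 * ‖deriv (f t) x‖)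
        = ∫ x in (0:ℝ)..1, g3 x := by
      apply intervalIntegral.integral_congr
      intro x _
      simp only [hg3]
      rw [real_inner_self_eq_norm_sq]
      rfl
    have eq_b : (∫ x in (0:ℝ)..1,
          ⟪nT f ψ t x + nSIter (f t) 4 (ψ t) x, ψ t x⟫ * ‖deriv (f t) x‖)
        = (∫ x in (0:ℝ)..1, g4 x) + (∫ x in (0:ℝ)..1, g1 x) := by
      rw [← intervalIntegral.integral_add hi4 hi1]
      apply intervalIntegral.integral_congr
      intro x _
      simp only [hg4, hg1]
      rw [inner_add_left]
      ring
    have eq_c : ⟪ψ t 1, nSIter (f t) 3 (ψ t) 1⟫ = ⟪nSIter (f t) 3 (ψ t) 1, ψ t 1⟫ :=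
      real_inner_comm _ _
    have eq_d : ⟪ψ t 0, nSIter (f t) 3 (ψ t) 0⟫ = ⟪nSIter (f t) 3 (ψ t) 0, ψ t 0⟫ :=
      real_inner_comm _ _
    have eq_e : ⟪nS (f t) (ψ t) 1, nSIter (f t) 2 (ψ t) 1⟫
        = ⟪nSIter (f t) 2 (ψ t) 1, nS (f t) (ψ t) 1⟫ := real_inner_comm _ _
    have eq_f : ⟪nS (f t) (ψ t) 0, nSIter (f t) 2 (ψ t) 0⟫
        = ⟪nSIter (f t) 2 (ψ t) 0, nS (f t) (ψ t) 0⟫ := real_inner_comm _ _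
    rw [eq_a, eq_b, eq_c, eq_d, eq_e, eq_f]
    have e5 : (∫ x in (0:ℝ)..1, ‖ψ t x‖ ^ 2 * ⟪curv (f t) x, pT f t x⟫ * ‖deriv (f t) x‖)
        = ∫ x in (0:ℝ)..1, g5 x := by
      apply intervalIntegral.integral_congr
      intro x _
      simp only [hg5]
      try ring
    rw [e5]
    linarith [ibp1, ibp2]
  · -- boundary terms vanish
    intro hbd t ht
    obtain ⟨h0, h1⟩ := hbd t ht
    rw [h0, h1, inner_zero_left, inner_zero_left, sub_zero]


end
end

section
/- Let f : [0,T) × [0,1] → ℝⁿ be smooth with f(t,·) regular for each t, suppose ∂ₜf = V is purely normal on (0,T) × (0,1), and suppose the endpoints are fixed in time: f(t,0) and f(t,1) are constant in t. Define ψ¹ = ∇ₜf = ∂ₜf and inductively ψ^{i+1} = ∇ₜψ^i. Then for every ζ ∈ ℝⁿ, every i ∈ ℕ and every t ∈ (0,T), at each boundary point x ∈ {0,1}: (i) ∂ₜ⟨ζ, τ⟩ = ⟨ζ, ∇ₛψ¹⟩; (ii) ∇ₜ(⟨ζ, τ⟩τ) = ⟨ζ, τ⟩∇ₛψ¹; (iii)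 ∂ₜ⟨ζ, ∇ₛψⁱ⟩ = ⟨ζ, ∇ₛψ^{i+1}⟩ − ⟨ζ, τ⟩⟨∇ₛψ¹, ∇ₛψⁱ⟩. -/
open scoped RealInnerProductSpace
open MeasureTheory

noncomputable section

variable {n : ℕ}

/-- Iterated normal time derivative `∇ₜⁱ f` (so `psiIter f 1 = ∇ₜ f`). -/
def psiIter (f : ℝ → ℝ → En n) : ℕ → ℝ → ℝ → En n
  | 0 => f
  | i + 1 => nT f (psiIter f i)

section AuxDeriv

open Filter

lemma wle1 : (1 : WithTop ℕ∞) ≤ ((⊤:ℕ∞) : WithTop ℕ∞) := by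
  rw [show ((1:WithTop ℕ∞)) = ((1:ℕ∞) : WithTop ℕ∞) by rfl]
  exact WithTop.coe_le_coe.mpr le_top

lemma wle2 : (2 : WithTop ℕ∞) ≤ ((⊤:ℕ∞) : WithTop ℕ∞) := by
  rw [show ((2:WithTop ℕ∞)) = ((2:ℕ∞) : WithTop ℕ∞) by rfl]
  exact WithTop.coe_le_coe.mpr le_top

lemma wne0 : ((⊤:ℕ∞) : WithTop ℕ∞) ≠ 0 := by simp

variable {E : Type*} [NormedAddCommGroup E] [NormedSpace ℝ E]

lemma hasDerivAt_slice1 {G : ℝ × ℝ → E} {s y : ℝ} (hG : DifferentiableAt ℝ G (s, y)) :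
    HasDerivAt (fun s' => G (s', y)) (fderiv ℝ G (s, y) (1, 0)) s := by
  have h1 : HasDerivAt (fun s' : ℝ => (s', y)) ((1 : ℝ), (0 : ℝ)) s :=
    HasDerivAt.prodMk (hasDerivAt_id s) (hasDerivAt_const s y)
  exact hG.hasFDerivAt.comp_hasDerivAt s h1

lemma hasDerivAt_slice2 {G : ℝ × ℝ → E} {s y : ℝ} (hG : DifferentiableAt ℝ G (s, y)) :
    HasDerivAt (fun y' => G (s, y')) (fderiv ℝ G (s, y) (0, 1)) y := by
  have h1 : HasDerivAt (fun y' : ℝ => (s, y')) ((0 : ℝ), (1 : ℝ)) y :=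
    HasDerivAt.prodMk (hasDerivAt_const y s) (hasDerivAt_id y)
  exact hG.hasFDerivAt.comp_hasDerivAt y h1

lemma contDiffAt_pd {G : ℝ × ℝ → E} {p : ℝ × ℝ} (hG : ContDiffAt ℝ (⊤ : ℕ∞) G p) (v : ℝ × ℝ) :
    ContDiffAt ℝ (⊤ : ℕ∞) (fun q => fderiv ℝ G q v) p :=
  (hG.fderiv_right (by simp)).clm_apply contDiffAt_const

lemma diffAt_pd {G : ℝ × ℝ → E} {p : ℝ × ℝ} (hG : ContDiffAt ℝ (⊤ : ℕ∞) G p) (v : ℝ × ℝ) :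
    DifferentiableAt ℝ (fun q => fderiv ℝ G q v) p :=
  (contDiffAt_pd hG v).differentiableAt wne0

lemma pd_comm_s9 {G : ℝ × ℝ → E} {p : ℝ × ℝ} (hG : ContDiffAt ℝ (⊤ : ℕ∞) G p) (v w : ℝ × ℝ) :
    fderiv ℝ (fun q => fderiv ℝ G q v) p w = fderiv ℝ (fun q => fderiv ℝ G q w) p v := by
  have hsymm : IsSymmSndFDerivAt ℝ G p := hG.isSymmSndFDerivAt (by rw [minSmoothness_of_isRCLikeNormedField]; exact wle2)
  have hd : DifferentiableAt ℝ (fderiv ℝ G) p :=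
    (hG.fderiv_right (m := (⊤:ℕ∞)) (by simp)).differentiableAt wne0
  have h1 : ∀ u : ℝ × ℝ, fderiv ℝ (fun q => fderiv ℝ G q u) p
      = (ContinuousLinearMap.apply ℝ E u).comp (fderiv ℝ (fderiv ℝ G) p) := by
    intro u
    have h2 : (fun q => fderiv ℝ G q u) = (ContinuousLinearMap.apply ℝ E u) ∘ (fderiv ℝ G) := rfl
    rw [h2, fderiv_comp _ (ContinuousLinearMap.apply ℝ E u).differentiableAt hd,
      ContinuousLinearMap.fderiv]
  rw [h1 v, h1 w]
  simpa [ContinuousLinearMap.comp_apply] using hsymm w v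

end AuxDeriv
section PrivateDefs

variable {n : ℕ}

/-- Partial derivative of the uncurried map in the time direction. -/
private def VfD (f : ℝ → ℝ → En n) : ℝ × ℝ → En n :=
  fun p => fderiv ℝ (Function.uncurry f) p (1, 0)

/-- Partial derivative of the uncurried map in the space direction. -/
private def EfD (f : ℝ → ℝ → En n) : ℝ × ℝ → En n :=
  fun p => fderiv ℝ (Function.uncurry f) p (0, 1)

/-- Uncurried unit tangent. -/
private def TfD (f : ℝ → ℝ → En n) : ℝ × ℝ → En n :=
  fun p => ‖EfD f p‖⁻¹ • EfD f p

/-- Uncurried arclength derivative of `g` along `f`. -/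
private def SD (f g : ℝ → ℝ → En n) : ℝ × ℝ → En n :=
  fun p => ‖EfD f p‖⁻¹ • fderiv ℝ (Function.uncurry g) p (0, 1)

/-- Uncurried normal arclength derivative of `g` along `f`. -/
private def ND (f g : ℝ → ℝ → En n) : ℝ × ℝ → En n :=
  fun p => SD f g p - ⟪SD f g p, TfD f p⟫ • TfD f p

end PrivateDefs
set_option maxHeartbeats 1200000 in
/-- Boundary identities for the fields `ψⁱ = ∇ₜⁱ f` along a purely normal flow with
fixed endpoints. -/
theorem boundary_identities (n : ℕ) (hn : 2 ≤ n)
    (T : ℝ) (hT : 0 < T)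
    (f : ℝ → ℝ → En n)
    (hsmooth : ContDiff ℝ (⊤ : ℕ∞) (Function.uncurry f))
    (hreg : ∀ t ∈ Set.Ico (0:ℝ) T, ∀ x ∈ Set.Icc (0:ℝ) 1, deriv (f t) x ≠ 0)
    (hnormalflow : ∀ t ∈ Set.Ioo (0:ℝ) T, ∀ x ∈ Set.Ioo (0:ℝ) 1,
      ⟪pT f t x, tang (f t) x⟫ = 0)
    (hbd₀ : ∀ t ∈ Set.Ico (0:ℝ) T, f t 0 = f 0 0)
    (hbd₁ : ∀ t ∈ Set.Ico (0:ℝ) T, f t 1 = f 0 1) :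
    ∀ ζ : En n, ∀ t ∈ Set.Ioo (0:ℝ) T, ∀ x ∈ ({0, 1} : Set ℝ),
      (deriv (fun s => ⟪ζ, tang (f s) x⟫) t = ⟪ζ, nSF f (psiIter f 1) t x⟫) ∧
      (nT f (fun s y => ⟪ζ, tang (f s) y⟫ • tang (f s) y) t x
        = ⟪ζ, tang (f t) x⟫ • nSF f (psiIter f 1) t x) ∧
      (∀ i : ℕ, 1 ≤ i →
        deriv (fun s => ⟪ζ, nSF f (psiIter f i) s x⟫) t
          = ⟪ζ, nSF f (psiIter f (i + 1)) t x⟫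
            - ⟪ζ, tang (f t) x⟫ * ⟪nSF f (psiIter f 1) t x, nSF f (psiIter f i) t x⟫) := by
  intro ζ t ht x hx
  have hx01 : x ∈ Set.Icc (0:ℝ) 1 := by
    rcases hx with h | h
    · simp [h]
    · simp only [Set.mem_singleton_iff] at h; simp [h]
  have hbdx : ∀ s ∈ Set.Ico (0:ℝ) T, f s x = f 0 x := by
    rcases hx with h | h
    · simpa [h] using hbd₀
    · simp only [Set.mem_singleton_iff] at h; simpa [h] using hbd₁
  have htI : t ∈ Set.Ico (0:ℝ) T := ⟨ht.1.le, ht.2⟩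
  have hFsm : ContDiff ℝ (⊤:ℕ∞) (Function.uncurry f) := hsmooth
  have hEfsm : ContDiff ℝ (⊤:ℕ∞) (EfD f) := by
    exact (hFsm.fderiv_right (by simp)).clm_apply contDiff_const
  have hVfsm : ContDiff ℝ (⊤:ℕ∞) (VfD f) := by
    exact (hFsm.fderiv_right (by simp)).clm_apply contDiff_const
  have hFd : ∀ p : ℝ × ℝ, DifferentiableAt ℝ (Function.uncurry f) p :=
    fun p => hFsm.differentiable wne0 p
  have hderiv2 : ∀ s y : ℝ, deriv (f s) y = EfD f (s, y) := fun s y =>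
    (hasDerivAt_slice2 (hFd (s, y))).deriv
  have hpTf : ∀ s y : ℝ, pT f s y = VfD f (s, y) := fun s y =>
    (hasDerivAt_slice1 (hFd (s, y))).deriv
  have htang : ∀ s y : ℝ, tang (f s) y = TfD f (s, y) := by
    intro s y
    show ‖deriv (f s) y‖⁻¹ • deriv (f s) y = TfD f (s, y)
    rw [hderiv2]; rfl
  have hE0 : EfD f (t, x) ≠ 0 := by
    have h := hreg t htI x hx01
    rwa [hderiv2] at h
  set U : Set (ℝ × ℝ) := {p | EfD f p ≠ 0} with hU_def
  have hUo : IsOpen U := IsOpen.preimage hEfsm.continuous isOpen_ne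
  have hqU : (t, x) ∈ U := hE0
  have hTnorm : ∀ p ∈ U, ⟪TfD f p, TfD f p⟫ = (1:ℝ) := by
    intro p hp
    have h1 : ‖TfD f p‖ = 1 := by
      show ‖‖EfD f p‖⁻¹ • EfD f p‖ = 1
      rw [norm_smul, norm_inv, norm_norm, inv_mul_cancel₀ (norm_ne_zero_iff.mpr hp)]
    rw [real_inner_self_eq_norm_mul_norm, h1, one_mul]
  -- endpoint is fixed in time
  have hVline : ∀ s ∈ Set.Ioo (0:ℝ) T, VfD f (s, x) = 0 := by
    intro s hs
    have hev : (fun s' => f s' x) =ᶠ[nhds s] fun _ => f 0 x := by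
      filter_upwards [Ioo_mem_nhds hs.1 hs.2] with s' hs'
      exact hbdx s' ⟨hs'.1.le, hs'.2⟩
    have h1 : deriv (fun s' => f s' x) s = 0 := by rw [hev.deriv_eq, deriv_const]
    rw [← hpTf]
    exact h1
  have hVq : VfD f (t, x) = 0 := hVline t ht
  -- the key vanishing coming from normality of the flow
  have hkey : ⟪fderiv ℝ (VfD f) (t, x) (0, 1), EfD f (t, x)⟫ = 0 := by
    have hPhi0 : ∀ p ∈ Set.Ioo (0:ℝ) T ×ˢ Set.Ioo (0:ℝ) 1, ⟪VfD f p, EfD f p⟫ = (0:ℝ) := by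
      rintro ⟨s, y⟩ ⟨hs, hy⟩
      have h1 := hnormalflow s hs y hy
      rw [hpTf, htang] at h1
      have h1' : ‖EfD f (s, y)‖⁻¹ * ⟪VfD f (s, y), EfD f (s, y)⟫ = 0 := by
        rw [← real_inner_smul_right]; exact h1
      have h2 : ‖EfD f (s, y)‖⁻¹ ≠ 0 := by
        apply inv_ne_zero; apply norm_ne_zero_iff.mpr
        have h3 := hreg s ⟨hs.1.le, hs.2⟩ y ⟨hy.1.le, hy.2.le⟩
        rwa [hderiv2] at h3
      exact (mul_eq_zero.mp h1').resolve_left h2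
    have hΦsm : ContDiff ℝ (⊤:ℕ∞) (fun p : ℝ × ℝ => ⟪VfD f p, EfD f p⟫) :=
      hVfsm.inner ℝ hEfsm
    have hdΦ0 : ∀ p ∈ Set.Ioo (0:ℝ) T ×ˢ Set.Ioo (0:ℝ) 1,
        fderiv ℝ (fun p : ℝ × ℝ => ⟪VfD f p, EfD f p⟫) p = 0 := by
      intro p hp
      have hev : (fun p : ℝ × ℝ => ⟪VfD f p, EfD f p⟫) =ᶠ[nhds p] fun _ => (0:ℝ) :=
        Filter.eventuallyEq_of_mem ((isOpen_Ioo.prod isOpen_Ioo).mem_nhds hp) hPhi0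
      rw [hev.fderiv_eq]; exact fderiv_const_apply 0
    have hcont : Continuous (fderiv ℝ (fun p : ℝ × ℝ => ⟪VfD f p, EfD f p⟫)) :=
      (hΦsm.fderiv_right (m := 0) (by simpa using wle1)).continuous
    have hsub : closure (Set.Ioo (0:ℝ) T ×ˢ Set.Ioo (0:ℝ) 1)
        ⊆ {p : ℝ × ℝ | fderiv ℝ (fun p : ℝ × ℝ => ⟪VfD f p, EfD f p⟫) p = 0} :=
      closure_minimal hdΦ0 (isClosed_eq hcont continuous_const)
    have hqcl : ((t, x) : ℝ × ℝ) ∈ closure (Set.Ioo (0:ℝ) T ×ˢ Set.Ioo (0:ℝ) 1) := by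
      rw [closure_prod_eq, closure_Ioo hT.ne, closure_Ioo (zero_ne_one' ℝ)]
      exact ⟨⟨ht.1.le, ht.2.le⟩, hx01⟩
    have hdq : fderiv ℝ (fun p : ℝ × ℝ => ⟪VfD f p, EfD f p⟫) (t, x) = 0 := hsub hqcl
    have hVd : HasFDerivAt (VfD f) (fderiv ℝ (VfD f) (t, x)) (t, x) :=
      ((hVfsm.differentiable wne0) (t, x)).hasFDerivAt
    have hEd : HasFDerivAt (EfD f) (fderiv ℝ (EfD f) (t, x)) (t, x) :=
      ((hEfsm.differentiable wne0) (t, x)).hasFDerivAt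
    have hΦd := hVd.inner ℝ hEd
    have h5 := hΦd.fderiv
    rw [hdq] at h5
    have h6 := congrArg (fun L : ℝ × ℝ →L[ℝ] ℝ => L (0, 1)) h5
    simpa [fderivInnerCLM_apply, hVq] using h6.symm
  have hEd : HasFDerivAt (EfD f) (fderiv ℝ (EfD f) (t, x)) (t, x) :=
    ((hEfsm.differentiable wne0) (t, x)).hasFDerivAt
  have hswap : fderiv ℝ (EfD f) (t, x) (1, 0) = fderiv ℝ (VfD f) (t, x) (0, 1) := by
    exact pd_comm_s9 hFsm.contDiffAt (0, 1) (1, 0)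
  -- derivative of the inverse length factor
  obtain ⟨Dr, hrd, hrd10⟩ :
      ∃ D : ℝ × ℝ →L[ℝ] ℝ, HasFDerivAt (fun p : ℝ × ℝ => ‖EfD f p‖⁻¹) D (t, x) ∧
        D (1, 0) = 0 := by
    have hρd := hEd.inner ℝ hEd
    have hEn : ‖EfD f (t, x)‖ ≠ 0 := norm_ne_zero_iff.mpr hE0
    have hρeq : ⟪EfD f (t, x), EfD f (t, x)⟫ = ‖EfD f (t, x)‖ * ‖EfD f (t, x)‖ :=
      real_inner_self_eq_norm_mul_norm _
    have hρ_ne : ⟪EfD f (t, x), EfD f (t, x)⟫ ≠ (0:ℝ) := by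
      rw [hρeq]; exact mul_ne_zero hEn hEn
    have hsqrt_ne : Real.sqrt ⟪EfD f (t, x), EfD f (t, x)⟫ ≠ 0 := by
      rw [hρeq, Real.sqrt_mul_self (norm_nonneg _)]; exact hEn
    have hsq : HasDerivAt (fun z : ℝ => (Real.sqrt z)⁻¹)
        (-(1 / (2 * Real.sqrt ⟪EfD f (t, x), EfD f (t, x)⟫)) /
          Real.sqrt ⟪EfD f (t, x), EfD f (t, x)⟫ ^ 2)
        ⟪EfD f (t, x), EfD f (t, x)⟫ :=
      (Real.hasDerivAt_sqrt hρ_ne).inv hsqrt_ne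
    have hcomp := hsq.comp_hasFDerivAt (t, x) hρd
    have hfun : (fun p : ℝ × ℝ => ‖EfD f p‖⁻¹)
        = (fun z : ℝ => (Real.sqrt z)⁻¹) ∘ (fun p => ⟪EfD f p, EfD f p⟫) := by
      funext p
      simp only [Function.comp_apply]
      rw [real_inner_self_eq_norm_mul_norm, Real.sqrt_mul_self (norm_nonneg _)]
    refine ⟨_, by rw [hfun]; exact hcomp, ?_⟩
    have hE10 : ⟪EfD f (t, x), fderiv ℝ (EfD f) (t, x) (1, 0)⟫ = 0 := by
      rw [hswap, real_inner_comm]; exact hkey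
    simp only [ContinuousLinearMap.smul_apply, ContinuousLinearMap.comp_apply,
      ContinuousLinearMap.prod_apply, fderivInnerCLM_apply, smul_eq_mul]
    rw [hE10, hswap, hkey]
    ring
  -- derivative of the tangent
  obtain ⟨DT, hTd, hDT10⟩ :
      ∃ D : ℝ × ℝ →L[ℝ] En n, HasFDerivAt (TfD f) D (t, x) ∧
        D (1, 0) = ‖EfD f (t, x)‖⁻¹ • fderiv ℝ (VfD f) (t, x) (0, 1) := by
    refine ⟨_, hrd.smul hEd, ?_⟩
    simp [hrd10, hswap]
  have hWT : ⟪‖EfD f (t, x)‖⁻¹ • fderiv ℝ (VfD f) (t, x) (0, 1), TfD f (t, x)⟫ = 0 := by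
    show ⟪_, ‖EfD f (t, x)‖⁻¹ • EfD f (t, x)⟫ = 0
    rw [real_inner_smul_left, real_inner_smul_right, hkey]
    ring
  -- smoothness of the tangent on U
  have hTsm : ∀ p ∈ U, ContDiffAt ℝ (⊤:ℕ∞) (TfD f) p := by
    intro p hp
    have h1 : ContDiffAt ℝ (⊤:ℕ∞) (fun q => ‖EfD f q‖) p := hEfsm.contDiffAt.norm ℝ hp
    exact (h1.inv (norm_ne_zero_iff.mpr hp)).smul hEfsm.contDiffAt
  -- smoothness of the iterated normal velocities on U
  have hPsiSm : ∀ i : ℕ, ∀ p ∈ U, ContDiffAt ℝ (⊤:ℕ∞) (Function.uncurry (psiIter f i)) p := by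
    intro i
    induction i with
    | zero => exact fun p _ => hFsm.contDiffAt
    | succ i ih =>
      intro p hp
      have heq : ∀ q ∈ U, Function.uncurry (psiIter f (i + 1)) q
          = fderiv ℝ (Function.uncurry (psiIter f i)) q (1, 0)
            - ⟪fderiv ℝ (Function.uncurry (psiIter f i)) q (1, 0), TfD f q⟫ • TfD f q := by
        rintro ⟨s, y⟩ hq
        have h1 : pT (psiIter f i) s y
            = fderiv ℝ (Function.uncurry (psiIter f i)) (s, y) (1, 0) :=
          (hasDerivAt_slice1 ((ih _ hq).differentiableAt wne0)).deriv
        show nT f (psiIter f i) s y = _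
        rw [nT]
        rw [h1, htang]
      have hev : Function.uncurry (psiIter f (i + 1)) =ᶠ[nhds p]
          fun q => fderiv ℝ (Function.uncurry (psiIter f i)) q (1, 0)
            - ⟪fderiv ℝ (Function.uncurry (psiIter f i)) q (1, 0), TfD f q⟫ • TfD f q :=
        Filter.eventuallyEq_of_mem (hUo.mem_nhds hp) heq
      have h2 := contDiffAt_pd (ih p hp) (1, 0)
      exact ((h2.sub ((h2.inner ℝ (hTsm p hp)).smul (hTsm p hp)))).congr_of_eventuallyEq hev
  -- the step formula
  have hstep : ∀ (i : ℕ), ∀ q ∈ U, Function.uncurry (psiIter f (i + 1)) q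
      = fderiv ℝ (Function.uncurry (psiIter f i)) q (1, 0)
        - ⟪fderiv ℝ (Function.uncurry (psiIter f i)) q (1, 0), TfD f q⟫ • TfD f q := by
    rintro i ⟨s, y⟩ hq
    have h1 : pT (psiIter f i) s y
        = fderiv ℝ (Function.uncurry (psiIter f i)) (s, y) (1, 0) :=
      (hasDerivAt_slice1 ((hPsiSm i _ hq).differentiableAt wne0)).deriv
    show nT f (psiIter f i) s y = _
    rw [nT]
    rw [h1, htang]
  -- vanishing of the normal velocities at the endpoint
  have hPsi0 : ∀ (i : ℕ), ∀ s ∈ Set.Ioo (0:ℝ) T, psiIter f (i + 1) s x = 0 := by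
    intro i
    induction i with
    | zero =>
      intro s hs
      have h0 : pT f s x = 0 := by
        have hev : (fun s' => f s' x) =ᶠ[nhds s] fun _ => f 0 x := by
          filter_upwards [Ioo_mem_nhds hs.1 hs.2] with s' hs'
          exact hbdx s' ⟨hs'.1.le, hs'.2⟩
        show deriv (fun s' => f s' x) s = 0
        rw [hev.deriv_eq, deriv_const]
      show nT f f s x = 0
      rw [nT, h0]
      simp
    | succ i ih =>
      intro s hs
      have h0 : pT (psiIter f (i + 1)) s x = 0 := by
        have hev : (fun s' => psiIter f (i + 1) s' x) =ᶠ[nhds s] fun _ => (0 : En n) := by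
          filter_upwards [Ioo_mem_nhds hs.1 hs.2] with s' hs'
          exact ih s' hs'
        show deriv (fun s' => psiIter f (i + 1) s' x) s = 0
        rw [hev.deriv_eq, deriv_const]
      show nT f (psiIter f (i + 1)) s x = 0
      rw [nT, h0]
      simp
  -- the normal velocities are normal on U
  have hPsiNorm : ∀ (i : ℕ), ∀ p ∈ U, ⟪Function.uncurry (psiIter f (i + 1)) p, TfD f p⟫ = (0:ℝ) := by
    rintro i ⟨s, y⟩ hp
    show ⟪nT f (psiIter f i) s y, TfD f (s, y)⟫ = (0:ℝ)
    rw [nT]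
    rw [htang, inner_sub_left, real_inner_smul_left, hTnorm _ hp]
    ring
  -- pointwise identification of nSF with ND on U
  have hnSF : ∀ (i : ℕ) (s y : ℝ), (s, y) ∈ U →
      nSF f (psiIter f i) s y = ND f (psiIter f i) (s, y) := by
    intro i s y hp
    have h1 : deriv (psiIter f i s) y
        = fderiv ℝ (Function.uncurry (psiIter f i)) (s, y) (0, 1) :=
      (hasDerivAt_slice2 ((hPsiSm i _ hp).differentiableAt wne0)).deriv
    show nS (f s) (psiIter f i s) y = _
    rw [nS]
    show aD (f s) (psiIter f i s) y - _ • tang (f s) y = _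
    rw [aD]
    rw [hderiv2, h1, htang]
    rfl
  have hline : HasDerivAt (fun s : ℝ => ((s, x) : ℝ × ℝ)) ((1:ℝ), (0:ℝ)) t :=
    HasDerivAt.prodMk (hasDerivAt_id t) (hasDerivAt_const t x)
  -- the value of nSF f ψ¹ at (t,x)
  have hPsi1u : ∀ s y : ℝ, Function.uncurry (psiIter f 1) (s, y)
      = VfD f (s, y) - ⟪VfD f (s, y), TfD f (s, y)⟫ • TfD f (s, y) := by
    intro s y
    show nT f f s y = _
    rw [nT, hpTf, htang]
  have hVd : HasFDerivAt (VfD f) (fderiv ℝ (VfD f) (t, x)) (t, x) :=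
    ((hVfsm.differentiable wne0) (t, x)).hasFDerivAt
  have hZT : ⟪fderiv ℝ (VfD f) (t, x) (0, 1), TfD f (t, x)⟫ = 0 := by
    show ⟪_, ‖EfD f (t, x)‖⁻¹ • EfD f (t, x)⟫ = 0
    rw [real_inner_smul_right, hkey]
    ring
  have hG1 : fderiv ℝ (Function.uncurry (psiIter f 1)) (t, x) (0, 1)
      = fderiv ℝ (VfD f) (t, x) (0, 1) := by
    have hfun1 : Function.uncurry (psiIter f 1)
        = fun p : ℝ × ℝ => VfD f p - ⟪VfD f p, TfD f p⟫ • TfD f p := by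
      funext p
      exact hPsi1u p.1 p.2
    have hD := hVd.sub (((hVd.inner ℝ hTd)).smul hTd)
    rw [hfun1, show (fun p : ℝ × ℝ => VfD f p - ⟪VfD f p, TfD f p⟫ • TfD f p)
      = VfD f - (fun t => ⟪VfD f t, TfD f t⟫) • TfD f from rfl, hD.fderiv]
    simp [fderivInnerCLM_apply, hVq, hZT]
  have hN1 : nSF f (psiIter f 1) t x
      = ‖EfD f (t, x)‖⁻¹ • fderiv ℝ (VfD f) (t, x) (0, 1) := by
    rw [hnSF 1 t x hqU, ND, SD, hG1]
    rw [real_inner_smul_left, hZT]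
    simp
  refine ⟨?_, ?_, ?_⟩
  · -- (i)
    have hfun : (fun s => ⟪ζ, tang (f s) x⟫) = fun s => ⟪ζ, TfD f (s, x)⟫ := by
      funext s; rw [htang]
    rw [hfun]
    have hσ := (hasFDerivAt_const ζ (t, x)).inner ℝ hTd
    have hslice : HasDerivAt (fun s => ⟪ζ, TfD f (s, x)⟫)
        (((fderivInnerCLM ℝ (ζ, TfD f (t, x))).comp
          ((0 : ℝ × ℝ →L[ℝ] En n).prod DT)) (1, 0)) t :=
      hσ.comp_hasDerivAt (f := fun s : ℝ => ((s, x) : ℝ × ℝ)) t hline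
    rw [hslice.deriv, hN1]
    simp [fderivInnerCLM_apply, hDT10]
  · -- (ii)
    have hσ := (hasFDerivAt_const ζ (t, x)).inner ℝ hTd
    have hGg := hσ.smul hTd
    have hfun2 : (fun s => ⟪ζ, tang (f s) x⟫ • tang (f s) x)
        = fun s => (fun p : ℝ × ℝ => ⟪ζ, TfD f p⟫ • TfD f p) (s, x) := by
      funext s; rw [htang]
    have hpTg : pT (fun s y => ⟪ζ, tang (f s) y⟫ • tang (f s) y) t x
        = ⟪ζ, TfD f (t, x)⟫ • DT (1, 0)
          + (((fderivInnerCLM ℝ (ζ, TfD f (t, x))).comp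
            ((0 : ℝ × ℝ →L[ℝ] En n).prod DT)) (1, 0)) • TfD f (t, x) := by
      show deriv (fun s => ⟪ζ, tang (f s) x⟫ • tang (f s) x) t = _
      rw [hfun2]
      have hslice : HasDerivAt (fun s => (fun p : ℝ × ℝ => ⟪ζ, TfD f p⟫ • TfD f p) (s, x))
          ((⟪ζ, TfD f (t, x)⟫ • DT
            + ((fderivInnerCLM ℝ (ζ, TfD f (t, x))).comp
              ((0 : ℝ × ℝ →L[ℝ] En n).prod DT)).smulRight (TfD f (t, x))) (1, 0)) t :=
        hGg.comp_hasDerivAt (f := fun s : ℝ => ((s, x) : ℝ × ℝ)) t hline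
      rw [hslice.deriv]
      simp only [ContinuousLinearMap.add_apply, ContinuousLinearMap.smul_apply,
        ContinuousLinearMap.smulRight_apply]
    show pT (fun s y => ⟪ζ, tang (f s) y⟫ • tang (f s) y) t x
        - ⟪pT (fun s y => ⟪ζ, tang (f s) y⟫ • tang (f s) y) t x, tang (f t) x⟫ • tang (f t) x
      = _
    rw [hpTg, htang]
    simp only [ContinuousLinearMap.comp_apply, ContinuousLinearMap.prod_apply,
      ContinuousLinearMap.zero_apply, fderivInnerCLM_apply, inner_zero_left, add_zero]
    rw [hDT10, hN1]
    have hTn : ⟪TfD f (t, x), TfD f (t, x)⟫ = (1:ℝ) := hTnorm _ hqU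
    rw [inner_add_left]
    simp only [real_inner_smul_left, hWT, hTn, mul_zero, mul_one, zero_add]
    module
  · -- (iii)
    intro i hi
    obtain ⟨j, rfl⟩ : ∃ j, i = j + 1 := ⟨i - 1, (Nat.succ_pred_eq_of_pos hi).symm⟩
    set i := j + 1
    have hΨq := hPsiSm i (t, x) hqU
    have hΨq0 : Function.uncurry (psiIter f i) (t, x) = 0 := hPsi0 j t ht
    -- ⟪u, T⟫ = 0
    have h_uT : ⟪fderiv ℝ (Function.uncurry (psiIter f i)) (t, x) (0, 1), TfD f (t, x)⟫ = 0 := by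
      have hΨd : HasFDerivAt (Function.uncurry (psiIter f i))
          (fderiv ℝ (Function.uncurry (psiIter f i)) (t, x)) (t, x) :=
        (hΨq.differentiableAt wne0).hasFDerivAt
      have hcd := hΨd.inner ℝ hTd
      have hcev : (fun p : ℝ × ℝ => ⟪Function.uncurry (psiIter f i) p, TfD f p⟫)
          =ᶠ[nhds (t, x)] fun _ => (0:ℝ) :=
        Filter.eventuallyEq_of_mem (hUo.mem_nhds hqU) (fun p hp => hPsiNorm j p hp)
      have hzero := (hcd.congr_of_eventuallyEq hcev.symm).unique (hasFDerivAt_const (0:ℝ) (t, x))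
      have h6 := congrArg (fun L : ℝ × ℝ →L[ℝ] ℝ => L (0, 1)) hzero
      simpa [fderivInnerCLM_apply, hΨq0] using h6
    -- the time derivative of ψ i vanishes along the endpoint line
    have hUnb : ∀ᶠ s in nhds t, ((s, x) : ℝ × ℝ) ∈ U := by
      have hc : ContinuousAt (fun s : ℝ => ((s, x) : ℝ × ℝ)) t :=
        (continuous_id.prodMk continuous_const).continuousAt
      exact hc.preimage_mem_nhds (hUo.mem_nhds hqU)
    have hHline : ∀ᶠ s in nhds t, fderiv ℝ (Function.uncurry (psiIter f i)) (s, x) (1, 0) = 0 := by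
      filter_upwards [hUnb, Ioo_mem_nhds ht.1 ht.2] with s hsU hsT
      have hslice : HasDerivAt (fun s' => Function.uncurry (psiIter f i) (s', x))
          (fderiv ℝ (Function.uncurry (psiIter f i)) (s, x) (1, 0)) s :=
        hasDerivAt_slice1 ((hPsiSm i (s, x) hsU).differentiableAt wne0)
      have hev0 : (fun s' => Function.uncurry (psiIter f i) (s', x)) =ᶠ[nhds s]
          fun _ => (0 : En n) := by
        filter_upwards [Ioo_mem_nhds hsT.1 hsT.2] with s' hs'
        exact hPsi0 j s' hs'
      rw [← hslice.deriv, hev0.deriv_eq, deriv_const]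
    have hHq0 : fderiv ℝ (Function.uncurry (psiIter f i)) (t, x) (1, 0) = 0 :=
      hHline.self_of_nhds
    -- Schwarz
    have hw_symm : fderiv ℝ (fun p => fderiv ℝ (Function.uncurry (psiIter f i)) p (1, 0)) (t, x) (0, 1)
        = fderiv ℝ (fun p => fderiv ℝ (Function.uncurry (psiIter f i)) p (0, 1)) (t, x) (1, 0) :=
      pd_comm_s9 hΨq (1, 0) (0, 1)
    -- derivative of ψ^{i+1} in the space direction at (t,x)
    have hHd : HasFDerivAt (fun p => fderiv ℝ (Function.uncurry (psiIter f i)) p (1, 0))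
        (fderiv ℝ (fun p => fderiv ℝ (Function.uncurry (psiIter f i)) p (1, 0)) (t, x)) (t, x) :=
      (diffAt_pd hΨq (1, 0)).hasFDerivAt
    have hGip1 : fderiv ℝ (Function.uncurry (psiIter f (i + 1))) (t, x) (0, 1)
        = fderiv ℝ (fun p => fderiv ℝ (Function.uncurry (psiIter f i)) p (0, 1)) (t, x) (1, 0)
          - ⟪fderiv ℝ (fun p => fderiv ℝ (Function.uncurry (psiIter f i)) p (0, 1)) (t, x) (1, 0),
              TfD f (t, x)⟫ • TfD f (t, x) := by
      have hsucc_ev : Function.uncurry (psiIter f (i + 1)) =ᶠ[nhds ((t, x) : ℝ × ℝ)]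
          fun p => fderiv ℝ (Function.uncurry (psiIter f i)) p (1, 0)
            - ⟪fderiv ℝ (Function.uncurry (psiIter f i)) p (1, 0), TfD f p⟫ • TfD f p :=
        Filter.eventuallyEq_of_mem (hUo.mem_nhds hqU) (hstep i)
      have hRd := hHd.sub ((hHd.inner ℝ hTd).smul hTd)
      have hΨ'd := hRd.congr_of_eventuallyEq hsucc_ev
      rw [hΨ'd.fderiv]
      simp only [ContinuousLinearMap.sub_apply, ContinuousLinearMap.add_apply,
        ContinuousLinearMap.smul_apply, ContinuousLinearMap.smulRight_apply,
        ContinuousLinearMap.comp_apply, ContinuousLinearMap.prod_apply, fderivInnerCLM_apply]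
      rw [hHq0, hw_symm]
      simp
    -- value of nSF at stage i
    have hNi : nSF f (psiIter f i) t x
        = ‖EfD f (t, x)‖⁻¹ • fderiv ℝ (Function.uncurry (psiIter f i)) (t, x) (0, 1) := by
      rw [hnSF i t x hqU, ND, SD]
      rw [real_inner_smul_left, h_uT]
      simp
    -- value of nSF at stage i+1
    have hNi1 : nSF f (psiIter f (i + 1)) t x
        = ‖EfD f (t, x)‖⁻¹ •
            fderiv ℝ (fun p => fderiv ℝ (Function.uncurry (psiIter f i)) p (0, 1)) (t, x) (1, 0)
          - (‖EfD f (t, x)‖⁻¹ *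
              ⟪fderiv ℝ (fun p => fderiv ℝ (Function.uncurry (psiIter f i)) p (0, 1)) (t, x) (1, 0),
                TfD f (t, x)⟫) • TfD f (t, x) := by
      rw [hnSF (i + 1) t x hqU, ND, SD, hGip1]
      have hTn : ⟪TfD f (t, x), TfD f (t, x)⟫ = (1:ℝ) := hTnorm _ hqU
      simp only [smul_sub, inner_sub_left, real_inner_smul_left, hTn, mul_one]
      module
    -- the left-hand side derivative
    have hLev : (fun s => ⟪ζ, nSF f (psiIter f i) s x⟫)
        =ᶠ[nhds t] fun s => ⟪ζ, ND f (psiIter f i) (s, x)⟫ := by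
      filter_upwards [hUnb] with s hsU
      rw [hnSF i s x hsU]
    rw [hLev.deriv_eq]
    have hGd : HasFDerivAt (fun p => fderiv ℝ (Function.uncurry (psiIter f i)) p (0, 1))
        (fderiv ℝ (fun p => fderiv ℝ (Function.uncurry (psiIter f i)) p (0, 1)) (t, x)) (t, x) :=
      (diffAt_pd hΨq (0, 1)).hasFDerivAt
    have hSd := hrd.smul hGd
    have hSd' : HasFDerivAt (SD f (psiIter f i))
        (‖EfD f (t, x)‖⁻¹ •
            fderiv ℝ (fun p => fderiv ℝ (Function.uncurry (psiIter f i)) p (0, 1)) (t, x)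
          + Dr.smulRight (fderiv ℝ (Function.uncurry (psiIter f i)) (t, x) (0, 1))) (t, x) := hSd
    have hNd := hSd'.sub ((hSd'.inner ℝ hTd).smul hTd)
    have hNd' : HasFDerivAt (ND f (psiIter f i)) _ (t, x) := hNd
    have hslice : HasDerivAt (fun s => ⟪ζ, ND f (psiIter f i) (s, x)⟫) _ t :=
      ((hasFDerivAt_const ζ (t, x)).inner ℝ hNd').comp_hasDerivAt (f := fun s : ℝ => ((s, x) : ℝ × ℝ)) t hline
    rw [hslice.deriv]
    -- evaluate everything
    have hSq : SD f (psiIter f i) (t, x)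
        = ‖EfD f (t, x)‖⁻¹ • fderiv ℝ (Function.uncurry (psiIter f i)) (t, x) (0, 1) := rfl
    rw [hNi1, hNi, hN1]
    simp only [ContinuousLinearMap.comp_apply, ContinuousLinearMap.prod_apply,
      ContinuousLinearMap.zero_apply, ContinuousLinearMap.sub_apply,
      ContinuousLinearMap.add_apply, ContinuousLinearMap.smul_apply,
      ContinuousLinearMap.smulRight_apply, fderivInnerCLM_apply, hSq, hrd10, hDT10, hHq0]
    rw [real_inner_smul_left, h_uT]
    simp only [inner_zero_left, zero_add, add_zero, mul_zero, zero_smul, zero_add, sub_zero]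
    rw [htang]
    simp only [inner_sub_right, inner_smul_right, real_inner_smul_left, real_inner_smul_right]
    rw [real_inner_comm (fderiv ℝ (VfD f) (t, x) (0, 1))
      (fderiv ℝ (Function.uncurry (psiIter f i)) (t, x) (0, 1))]
    ring
end
end
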